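/- arXiv:1010.4346 — 7 statements merged into one kernel-verified Lean document; each statement's English description precedes it below -/
import Mathlib

section
/- Let X be a real Banach space and let A: X ⇉ X* be a maximally monotone linear relation. Then A is of type (FPV). -/
open NormedSpace Set Pointwise

variable {X : Type*} [NormedAddCommGroup X] [NormedSpace ℝ X]

/-- The graph of a set-valued operator `A : X ⇉ X*`. -/
def gra (A : X → Set (StrongDual ℝ X)) : Set (X × StrongDual ℝ X) := {p | p.2 ∈ A p.1}

/-- The domain of a set-valued operator. -/
def domOp (A : X → Set (StrongDual ℝ X)) : Set X := {x | (A x).Nonempty}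

/-- `A` is a monotone operator. -/
def IsMonotoneOp (A : X → Set (StrongDual ℝ X)) : Prop :=
  ∀ p ∈ gra A, ∀ q ∈ gra A, 0 ≤ (p.2 - q.2) (p.1 - q.1)

/-- `A` is maximally monotone: it is monotone and has no proper monotone extension. -/
def IsMaxMonotoneOp (A : X → Set (StrongDual ℝ X)) : Prop :=
  IsMonotoneOp A ∧
    ∀ B : X → Set (StrongDual ℝ X), IsMonotoneOp B → gra A ⊆ gra B → gra B = gra A

/-- `A` is a linear relation: its graph is a linear subspace of `X × X*`. -/
def IsLinearRelation (A : X → Set (StrongDual ℝ X)) : Prop :=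
  ∃ S : Submodule ℝ (X × StrongDual ℝ X), (S : Set (X × StrongDual ℝ X)) = gra A

/-- The pointwise (Minkowski) sum of two set-valued operators. -/
def opSum (A B : X → Set (StrongDual ℝ X)) : X → Set (StrongDual ℝ X) := fun x => A x + B x

/-- Effective domain of an extended-real-valued function. -/
def fdom (f : X → EReal) : Set X := {x | f x ≠ ⊤}

/-- `f` is proper: not identically `+∞` and never `-∞`. -/
def EProper (f : X → EReal) : Prop := (∃ x, f x ≠ ⊤) ∧ ∀ x, f x ≠ ⊥

/-- Convexity of an extended-real-valued function. -/
def EConvex (f : X → EReal) : Prop :=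
  ∀ x y : X, ∀ t : ℝ, 0 ≤ t → t ≤ 1 →
    f (t • x + (1 - t) • y) ≤ (t : EReal) * f x + ((1 - t : ℝ) : EReal) * f y

/-- The subdifferential of `f`. -/
def subdiff (f : X → EReal) : X → Set (StrongDual ℝ X) :=
  fun x => {xs | ∀ y : X, ((xs (y - x) : ℝ) : EReal) + f x ≤ f y}

/-- The Fitzpatrick function of a set-valued operator. -/
noncomputable def fitz (A : X → Set (StrongDual ℝ X)) : X × StrongDual ℝ X → EReal :=
  fun p => ⨆ q ∈ gra A, ((p.2 q.1 + q.2 p.1 - q.2 q.1 : ℝ) : EReal)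

/-- `(x,x*)` is monotonically related to a set `G ⊆ X × X*`. -/
def MonRel (p : X × StrongDual ℝ X) (G : Set (X × StrongDual ℝ X)) : Prop :=
  ∀ q ∈ G, 0 ≤ (p.2 - q.2) (p.1 - q.1)

/-- A maximally monotone operator is of type (FPV). -/
def IsFPVOp (A : X → Set (StrongDual ℝ X)) : Prop :=
  IsMaxMonotoneOp A ∧
    ∀ U : Set X, IsOpen U → Convex ℝ U → (U ∩ domOp A).Nonempty →
      ∀ p : X × StrongDual ℝ X, p.1 ∈ U →
        MonRel p (gra A ∩ U ×ˢ (univ : Set (StrongDual ℝ X))) → p ∈ gra A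

/-- The normal cone operator of a set `C`. -/
def normalCone (C : Set X) : X → Set (StrongDual ℝ X) :=
  fun x => {xs | x ∈ C ∧ ∀ c ∈ C, xs (c - x) ≤ 0}


section FPVAux

variable {X : Type*} [NormedAddCommGroup X] [NormedSpace ℝ X]

/-- Auxiliary: the monotonicity gap of a pair of points of `X × X*`. -/
noncomputable def fpvGap (p q : X × StrongDual ℝ X) : ℝ := (p.2 - q.2) (p.1 - q.1)

lemma fpvGap_comm (p q : X × StrongDual ℝ X) : fpvGap p q = fpvGap q p := by
  simp only [fpvGap, ContinuousLinearMap.sub_apply, map_sub]; ring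

lemma fpvGap_add_smul (p a v : X × StrongDual ℝ X) (t : ℝ) :
    fpvGap p (a + t • v)
      = fpvGap p a - t * ((p.2 - a.2) v.1 + v.2 (p.1 - a.1)) + t ^ 2 * (v.2 v.1) := by
  simp only [fpvGap, Prod.fst_add, Prod.snd_add, Prod.smul_fst, Prod.smul_snd,
    ContinuousLinearMap.sub_apply, ContinuousLinearMap.add_apply,
    ContinuousLinearMap.smul_apply, map_sub, map_add, map_smul, smul_eq_mul]
  ring

lemma fpvGap_decompose (p a b : X × StrongDual ℝ X) :
    fpvGap p b = fpvGap p a + ((p.2 - a.2) (a - b).1 + (a - b).2 (p.1 - a.1))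
      + (a - b).2 (a - b).1 := by
  simp only [fpvGap, Prod.fst_sub, Prod.snd_sub, ContinuousLinearMap.sub_apply, map_sub]
  ring

lemma fpvGap_combo (p a b : X × StrongDual ℝ X) {σ τ : ℝ} (h : σ + τ = 1) :
    fpvGap p (σ • a + τ • b) = σ * fpvGap p a + τ * fpvGap p b - σ * τ * fpvGap a b := by
  have hτ : τ = 1 - σ := by linarith
  subst hτ
  simp only [fpvGap, Prod.fst_add, Prod.snd_add, Prod.smul_fst, Prod.smul_snd,
    ContinuousLinearMap.sub_apply, ContinuousLinearMap.add_apply,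
    ContinuousLinearMap.smul_apply, map_sub, map_add, map_smul, smul_eq_mul]
  ring

lemma fpv_eq_zero_of_forall_mul_lt {m u : ℝ} (h : ∀ t : ℝ, t * m < u) : m = 0 := by
  by_contra hm
  have h1 := h ((u + 1) / m)
  rw [div_mul_cancel₀ _ hm] at h1
  linarith

/-- A pair monotonically related to the whole graph of a maximally monotone operator
belongs to the graph. -/
lemma fpv_mem_gra_of_monrel (A : X → Set (StrongDual ℝ X)) (hA : IsMaxMonotoneOp A)
    (q : X × StrongDual ℝ X) (h : ∀ a ∈ gra A, 0 ≤ fpvGap q a) : q ∈ gra A := by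
  set B : X → Set (StrongDual ℝ X) := fun y => A y ∪ {w | (y, w) = q} with hB
  have hgraB : gra B = gra A ∪ {q} := by
    ext r
    simp [gra, B, Set.mem_union, or_comm]
  have hmonoB : IsMonotoneOp B := by
    intro r hr s hs
    rw [hgraB] at hr hs
    rcases hr with hr | hr
    · rcases hs with hs | hs
      · exact hA.1 r hr s hs
      · rw [Set.mem_singleton_iff] at hs
        subst hs
        have h1 := h r hr
        rw [fpvGap_comm] at h1
        exact h1
    · rw [Set.mem_singleton_iff] at hr
      subst hr
      rcases hs with hs | hs
      · exact h s hs
      · rw [Set.mem_singleton_iff] at hs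
        subst hs
        simp
  have hsub : gra A ⊆ gra B := by
    intro r hr; rw [hgraB]; exact Or.inl hr
  have hBA := hA.2 B hmonoB hsub
  have hq : q ∈ gra B := by
    rw [hgraB]; right; rfl
  rwa [hBA] at hq


/-- Main quantitative lemma: if the gap of `p` is nonnegative against all graph points with
first coordinate in `U`, and there are graph points with first coordinate arbitrarily close
to `p.1` and arbitrarily small gap, then `p` is monotonically related to the whole graph. -/
lemma fpv_monrel_of_approx (S : Submodule ℝ (X × StrongDual ℝ X)) (U : Set X)
    (p : X × StrongDual ℝ X)
    (hmono : ∀ a ∈ S, ∀ b ∈ S, 0 ≤ fpvGap a b)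
    (hrel : ∀ a ∈ S, a.1 ∈ U → 0 ≤ fpvGap p a)
    (ρ : ℝ) (hρ : 0 < ρ) (hball : Metric.ball p.1 (2 * ρ) ⊆ U)
    (happ : ∀ ε > 0, ∃ a ∈ S, ‖a.1 - p.1‖ < ρ ∧ fpvGap p a < ε) :
    ∀ b ∈ S, 0 ≤ fpvGap p b := by
  intro b hb
  have key : ∀ ε > 0, -ε ≤ fpvGap p b := by
    intro ε hε
    set R : ℝ := ρ + ‖p.1 - b.1‖ with hR
    have hRpos : 0 < R := by positivity
    set δ : ℝ := ρ / R with hδ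
    have hδpos : 0 < δ := div_pos hρ hRpos
    have hδ1 : δ ≤ 1 := by
      rw [hδ, div_le_one hRpos, hR]
      nlinarith [norm_nonneg (p.1 - b.1)]
    obtain ⟨a, haS, hadist, haF⟩ := happ (ε * δ) (by positivity)
    have haU : a.1 ∈ U := hball (by rw [Metric.mem_ball, dist_eq_norm]; linarith)
    have hF0 : 0 ≤ fpvGap p a := hrel a haS haU
    set v : X × StrongDual ℝ X := a - b with hv
    have hvS : v ∈ S := S.sub_mem haS hb
    have hv1 : ‖v.1‖ ≤ R := by
      have e : v.1 = (a.1 - p.1) + (p.1 - b.1) := by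
        rw [hv, Prod.fst_sub]; abel
      rw [e, hR]
      calc ‖(a.1 - p.1) + (p.1 - b.1)‖ ≤ ‖a.1 - p.1‖ + ‖p.1 - b.1‖ := norm_add_le _ _
        _ ≤ ρ + ‖p.1 - b.1‖ := by linarith
    have hc0 : 0 ≤ v.2 v.1 := by
      have h1 := hmono a haS b hb
      have e : fpvGap a b = v.2 v.1 := by rw [fpvGap, hv, Prod.fst_sub, Prod.snd_sub]
      linarith [e ▸ h1]
    have hwin : ∀ t : ℝ, |t| ≤ δ →
        0 ≤ fpvGap p a - t * ((p.2 - a.2) v.1 + v.2 (p.1 - a.1)) + t ^ 2 * (v.2 v.1) := by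
      intro t ht
      have hmem : a + t • v ∈ S := S.add_mem haS (S.smul_mem t hvS)
      have hU' : (a + t • v).1 ∈ U := by
        apply hball
        rw [Metric.mem_ball, dist_eq_norm]
        have e : (a + t • v).1 - p.1 = (a.1 - p.1) + t • v.1 := by
          rw [Prod.fst_add, Prod.smul_fst]; abel
        rw [e]
        have h2 : ‖t • v.1‖ ≤ δ * R := by
          rw [norm_smul, Real.norm_eq_abs]
          exact mul_le_mul ht hv1 (norm_nonneg _) hδpos.le
        have h3 : δ * R = ρ := by rw [hδ]; field_simp
        calc ‖(a.1 - p.1) + t • v.1‖ ≤ ‖a.1 - p.1‖ + ‖t • v.1‖ := norm_add_le _ _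
          _ < 2 * ρ := by rw [h3] at h2; linarith
      have h4 := hrel _ hmem hU'
      rwa [fpvGap_add_smul] at h4
    set β : ℝ := (p.2 - a.2) v.1 + v.2 (p.1 - a.1) with hβd
    set c : ℝ := v.2 v.1 with hcd
    have hβbound : δ * |β| ≤ fpvGap p a + δ ^ 2 * c := by
      have h1 := hwin δ (by rw [abs_of_pos hδpos])
      have h2 := hwin (-δ) (by rw [abs_neg, abs_of_pos hδpos])
      rcases abs_cases β with ⟨he, _⟩ | ⟨he, _⟩ <;> nlinarith
    have hβlow : -(fpvGap p a + δ ^ 2 * c) ≤ δ * β := by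
      have h1 : δ * (-|β|) ≤ δ * β :=
        mul_le_mul_of_nonneg_left (neg_abs_le β) hδpos.le
      nlinarith
    have hdecomp : fpvGap p b = fpvGap p a + β + c := by
      have h1 := fpvGap_decompose p a b
      rw [← hv] at h1
      rw [h1, hβd, hcd]
    have final : δ * (-ε) ≤ δ * (fpvGap p a + β + c) := by
      nlinarith [mul_nonneg hδpos.le hF0,
        mul_nonneg (mul_nonneg hδpos.le hc0) (by linarith : (0:ℝ) ≤ 1 - δ)]
    have := (mul_le_mul_iff_right₀ hδpos).mp final
    linarith [hdecomp ▸ this]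
  by_contra hneg
  push_neg at hneg
  linarith [key (-(fpvGap p b) / 2) (by linarith)]


/-- Core lemma: translated version of the (FPV) property, with `0 ∈ U`. -/
lemma fpv_core (A : X → Set (StrongDual ℝ X)) (hA : IsMaxMonotoneOp A)
    (S : Submodule ℝ (X × StrongDual ℝ X)) (hS : (S : Set (X × StrongDual ℝ X)) = gra A)
    (U : Set X) (hUo : IsOpen U) (h0 : (0 : X) ∈ U)
    (p : X × StrongDual ℝ X) (hx : p.1 ∈ U)
    (hrel : ∀ a ∈ S, a.1 ∈ U → 0 ≤ fpvGap p a) :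
    p ∈ S := by
  have hmemS : ∀ q : X × StrongDual ℝ X, q ∈ gra A ↔ q ∈ S := by
    intro q; rw [← SetLike.mem_coe, hS]
  have hmono : ∀ a ∈ S, ∀ b ∈ S, 0 ≤ fpvGap a b := by
    intro a ha b hb
    exact hA.1 a ((hmemS a).mpr ha) b ((hmemS b).mpr hb)
  have hmaxS : ∀ q : X × StrongDual ℝ X, (∀ a ∈ S, 0 ≤ fpvGap q a) → q ∈ S := by
    intro q hq
    refine (hmemS q).mp (fpv_mem_gra_of_monrel A hA q ?_)
    intro a ha
    exact hq a ((hmemS a).mp ha)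
  -- a radius around p.1 inside U
  obtain ⟨ε₀, hε₀, hball₀⟩ := Metric.isOpen_iff.mp hUo p.1 hx
  set ρ : ℝ := ε₀ / 2 with hρdef
  have hρ : 0 < ρ := by positivity
  have hball : Metric.ball p.1 (2 * ρ) ⊆ U := by
    have : 2 * ρ = ε₀ := by rw [hρdef]; ring
    rwa [this]
  -- the auxiliary convex set E
  set E : Set (X × ℝ) := {q | ∃ a ∈ S, a.1 = q.1 ∧ fpvGap p a ≤ q.2} with hE
  have hEconv : Convex ℝ E := by
    rintro q ⟨a, haS, ha1, hag⟩ q' ⟨a', haS', ha1', hag'⟩ σ τ hσ hτ hστ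
    refine ⟨σ • a + τ • a', S.add_mem (S.smul_mem σ haS) (S.smul_mem τ haS'), ?_, ?_⟩
    · rw [Prod.fst_add, Prod.smul_fst, Prod.smul_fst, ha1, ha1']
      rfl
    · rw [fpvGap_combo p a a' hστ]
      have hab := hmono a haS a' haS'
      have h1 : σ * fpvGap p a ≤ σ * q.2 := mul_le_mul_of_nonneg_left hag hσ
      have h2 : τ * fpvGap p a' ≤ τ * q'.2 := mul_le_mul_of_nonneg_left hag' hτ
      have h3 : 0 ≤ σ * τ * fpvGap a a' := mul_nonneg (mul_nonneg hσ hτ) hab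
      have e : (σ • q + τ • q').2 = σ * q.2 + τ * q'.2 := rfl
      rw [e]
      linarith
  by_cases hcl : ((p.1, (0:ℝ)) : X × ℝ) ∈ closure E
  · -- approximation branch
    have happ : ∀ ε > 0, ∃ a ∈ S, ‖a.1 - p.1‖ < ρ ∧ fpvGap p a < ε := by
      intro ε hε
      obtain ⟨q, hqE, hdist⟩ := Metric.mem_closure_iff.mp hcl (min ρ ε) (lt_min hρ hε)
      obtain ⟨a, haS, ha1, hag⟩ := hqE
      rw [Prod.dist_eq] at hdist
      have hd1 : dist p.1 q.1 < min ρ ε := lt_of_le_of_lt le_sup_left hdist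
      have hd2 : dist (0:ℝ) q.2 < min ρ ε := lt_of_le_of_lt le_sup_right hdist
      refine ⟨a, haS, ?_, ?_⟩
      · rw [ha1, ← dist_eq_norm, dist_comm]
        exact lt_of_lt_of_le hd1 (min_le_left _ _)
      · have : q.2 ≤ |q.2| := le_abs_self _
        have h2 : |q.2| < min ρ ε := by
          rw [Real.dist_eq] at hd2
          rwa [abs_sub_comm, sub_zero] at hd2
        have := lt_of_le_of_lt (hag.trans this) h2
        exact lt_of_lt_of_le this (min_le_right _ _)
    exact hmaxS p (fpv_monrel_of_approx S U p hmono hrel ρ hρ hball happ)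
  · -- separation branch: leads to a contradiction resolving into membership
    exfalso
    obtain ⟨f, u, hfb, hfx⟩ :=
      geometric_hahn_banach_closed_point (hEconv.closure) isClosed_closure hcl
    have hfE : ∀ q ∈ E, f q < u := fun q hq => hfb q (subset_closure hq)
    set φ : StrongDual ℝ X := f.comp (ContinuousLinearMap.inl ℝ X ℝ) with hφdef
    set s₀ : ℝ := f ((0 : X), (1 : ℝ)) with hs₀def
    have hsplit : ∀ (d : X) (t : ℝ), f (d, t) = φ d + t * s₀ := by
      intro d t
      have h1 : ((d, t) : X × ℝ) = (d, 0) + t • ((0:X), (1:ℝ)) := by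
        simp [Prod.ext_iff]
      rw [h1, map_add, map_smul, smul_eq_mul]
      congr 1
    have hmemE : ∀ a ∈ S, ((a.1, fpvGap p a) : X × ℝ) ∈ E :=
      fun a ha => ⟨a, ha, rfl, le_refl _⟩
    have hfx' : u < φ p.1 := by
      have := hfx
      rwa [hsplit, zero_mul, add_zero] at this
    have hs0le : s₀ ≤ 0 := by
      by_contra hpos
      push_neg at hpos
      set t : ℝ := max (fpvGap p 0) ((u + 1) / s₀) with ht
      have hmem : (((0:X), t) : X × ℝ) ∈ E := ⟨0, S.zero_mem, rfl, le_max_left _ _⟩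
      have h2 := hfE _ hmem
      rw [hsplit, map_zero, zero_add] at h2
      have h3 : (u + 1) / s₀ ≤ t := le_max_right _ _
      have h4 : u + 1 ≤ t * s₀ := by
        rw [div_le_iff₀ hpos] at h3; linarith
      linarith
    rcases lt_or_eq_of_le hs0le with hs0 | hs0
    · -- s₀ < 0 : produce a graph point above p.1, contradiction with hcl
      set θ : StrongDual ℝ X := (-s₀)⁻¹ • φ with hθdef
      have hneg : (0:ℝ) < -s₀ := by linarith
      have hmemS' : ((p.1, p.2 + θ) : X × StrongDual ℝ X) ∈ S := by
        apply hmaxS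
        intro a ha
        have h1 := hfE _ (hmemE a ha)
        rw [hsplit] at h1
        have h2 : fpvGap ((p.1, p.2 + θ)) a
            = fpvGap p a + (-s₀)⁻¹ * (φ p.1 - φ a.1) := by
          simp only [fpvGap, hθdef, ContinuousLinearMap.sub_apply,
            ContinuousLinearMap.add_apply, ContinuousLinearMap.smul_apply, map_sub,
            smul_eq_mul]
          ring
        rw [h2]
        have h5 : s₀ * fpvGap p a < φ p.1 - φ a.1 := by nlinarith
        have h6 : (-s₀)⁻¹ * (s₀ * fpvGap p a) = -fpvGap p a := by
          have hs : s₀ ≠ 0 := by linarith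
          field_simp
        have h7 := mul_lt_mul_of_pos_left h5 (inv_pos.mpr hneg)
        rw [h6] at h7
        linarith
      have hmem0 : ((p.1, (0:ℝ)) : X × ℝ) ∈ E := by
        refine ⟨(p.1, p.2 + θ), hmemS', rfl, ?_⟩
        have : fpvGap p ((p.1, p.2 + θ)) = 0 := by
          simp [fpvGap]
        rw [this]
      exact hcl (subset_closure hmem0)
    · -- s₀ = 0
      have hφS : ∀ a ∈ S, φ a.1 = 0 := by
        intro a ha
        apply fpv_eq_zero_of_forall_mul_lt (u := u)
        intro t
        have h1 := hfE _ (hmemE (t • a) (S.smul_mem t ha))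
        rw [hsplit, hs0, mul_zero, add_zero, Prod.smul_fst, map_smul, smul_eq_mul] at h1
        exact h1
      have hφmem : (((0:X), φ) : X × StrongDual ℝ X) ∈ S := by
        apply hmaxS
        intro a ha
        have h1 : fpvGap (((0:X), φ)) a = a.2 a.1 - φ a.1 := by
          simp only [fpvGap, ContinuousLinearMap.sub_apply, map_sub, map_zero, zero_sub,
            map_neg]
          ring
        have h2 : 0 ≤ a.2 a.1 := by
          have h3 := hmono a ha 0 S.zero_mem
          have e : fpvGap a 0 = a.2 a.1 := by simp [fpvGap]
          linarith [e ▸ h3]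
        rw [h1, hφS a ha]
        linarith
      have hφx : φ p.1 = 0 := by
        apply fpv_eq_zero_of_forall_mul_lt (u := p.2 p.1 + 1)
        intro t
        have h1 := hrel (t • (((0:X), φ))) (S.smul_mem t hφmem)
          (by rw [Prod.smul_fst]; simpa using h0)
        have h2 : fpvGap p (t • (((0:X), φ))) = p.2 p.1 - t * φ p.1 := by
          simp only [fpvGap, Prod.smul_fst, Prod.smul_snd, smul_zero, sub_zero,
            ContinuousLinearMap.sub_apply, ContinuousLinearMap.smul_apply, smul_eq_mul]
        rw [h2] at h1
        linarith
      rw [hφx] at hfx'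
      have hmem0 : (((0:X), max (fpvGap p 0) 0) : X × ℝ) ∈ E :=
        ⟨0, S.zero_mem, rfl, le_max_left _ _⟩
      have h4 := hfE _ hmem0
      rw [hsplit, hs0, mul_zero, add_zero, map_zero] at h4
      linarith

end FPVAux


/-- (Simons) Every maximally monotone linear relation on a real Banach space
is of type (FPV). -/
theorem linearRelation_isFPV
    {X : Type*} [NormedAddCommGroup X] [NormedSpace ℝ X] [CompleteSpace X]
    (A : X → Set (StrongDual ℝ X)) (hA : IsMaxMonotoneOp A) (hAlin : IsLinearRelation A) :
    IsFPVOp A := by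
  obtain ⟨S, hS⟩ := hAlin
  refine ⟨hA, ?_⟩
  intro U₀ hUo hUc hne p₀ hp₀U hp₀rel
  obtain ⟨z, hzU, hzdom⟩ := hne
  obtain ⟨z', hz'⟩ := hzdom
  have hwS : ((z, z') : X × StrongDual ℝ X) ∈ S := by
    rw [← SetLike.mem_coe, hS]; exact hz'
  set w : X × StrongDual ℝ X := (z, z') with hw
  set U : Set X := (fun v => v + z) ⁻¹' U₀ with hU
  have hUo' : IsOpen U := hUo.preimage (continuous_id.add continuous_const)
  have h0U : (0 : X) ∈ U := by
    simp only [hU, Set.mem_preimage, zero_add]; exact hzU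
  set p : X × StrongDual ℝ X := p₀ - w with hp
  have hpU : p.1 ∈ U := by
    simp only [hp, hU, Set.mem_preimage, Prod.fst_sub, hw, sub_add_cancel]
    exact hp₀U
  have hrel : ∀ a ∈ S, a.1 ∈ U → 0 ≤ fpvGap p a := by
    intro a ha haU
    have hq : (a + w) ∈ gra A := by
      rw [← hS]; exact S.add_mem ha hwS
    have hq2 : (a + w).1 ∈ U₀ := by
      rw [Prod.fst_add]
      exact haU
    have h1 := hp₀rel (a + w) ⟨hq, Set.mem_prod.mpr ⟨hq2, Set.mem_univ _⟩⟩
    have e1 : p.2 - a.2 = p₀.2 - (a + w).2 := by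
      rw [hp, Prod.snd_sub, Prod.snd_add]; abel
    have e2 : p.1 - a.1 = p₀.1 - (a + w).1 := by
      rw [hp, Prod.fst_sub, Prod.fst_add]; abel
    rw [fpvGap, e1, e2]
    exact h1
  have hpS : p ∈ S := fpv_core A hA S hS U hUo' h0U p hpU hrel
  have hsum : p + w ∈ S := S.add_mem hpS hwS
  have hps : p + w = p₀ := by rw [hp]; abel
  rw [hps, ← SetLike.mem_coe, hS] at hsum
  exact hsum
end

section
/- Let X be a real Banach space, let A: X ⇉ X* be a maximally monotone linear relation, and let f: X → (−∞,+∞] be a proper lower semicontinuous convex function. If x belongs to the norm closure of dom A and x ∈ int dom ∂f, then F_{A+∂f}(x, x*) ≥ ⟨x, x*⟩ for every x* ∈ X*. -/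
open NormedSpace Set Pointwise

variable {X : Type*} [NormedAddCommGroup X] [NormedSpace ℝ X]

lemma aux_fy_ne_top {f : X → EReal} (hproper : EProper f) {y : X}
    (hy : (subdiff f y).Nonempty) : f y ≠ ⊤ := by
  obtain ⟨ys, hys⟩ := hy
  obtain ⟨y₀, hy₀⟩ := hproper.1
  intro htop
  have h := hys y₀
  rw [htop, EReal.add_top_of_ne_bot (EReal.coe_ne_bot _)] at h
  exact hy₀ (top_le_iff.1 h)

lemma aux_subgrad {f : X → EReal} (hproper : EProper f) {a y : X} {bs : StrongDual ℝ X}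
    (hbs : bs ∈ subdiff f a) (ha : f a ≠ ⊤) (hy : f y ≠ ⊤) :
    bs (y - a) ≤ (f y).toReal - (f a).toReal := by
  have h := hbs y
  rw [← EReal.coe_toReal ha (hproper.2 a), ← EReal.coe_toReal hy (hproper.2 y),
    ← EReal.coe_add, EReal.coe_le_coe_iff] at h
  linarith

lemma aux_mid {f : X → EReal} (hproper : EProper f) (hconv : EConvex f) {u v : X}
    (hu : f u ≠ ⊤) (hv : f v ≠ ⊤) :
    f ((1/2 : ℝ) • u + (1/2 : ℝ) • v) ≠ ⊤ ∧
      (f ((1/2 : ℝ) • u + (1/2 : ℝ) • v)).toReal ≤ (f u).toReal / 2 + (f v).toReal / 2 := by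
  have h := hconv u v (1/2) (by norm_num) (by norm_num)
  rw [show (1 - 1/2 : ℝ) = 1/2 by norm_num] at h
  rw [← EReal.coe_toReal hu (hproper.2 u), ← EReal.coe_toReal hv (hproper.2 v),
    ← EReal.coe_mul, ← EReal.coe_mul, ← EReal.coe_add] at h
  have hne : f ((1/2 : ℝ) • u + (1/2 : ℝ) • v) ≠ ⊤ :=
    ne_top_of_le_ne_top (EReal.coe_ne_top _) h
  refine ⟨hne, ?_⟩
  rw [← EReal.coe_toReal hne (hproper.2 _), EReal.coe_le_coe_iff] at h
  linarith

set_option maxHeartbeats 4000000 in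
/-- If `A` is a maximally monotone linear relation, `f` is proper lsc convex,
`x ∈ closure (dom A)` and `x ∈ int dom ∂f`, then the Fitzpatrick function of
`A + ∂f` dominates the duality pairing at `(x, x*)` for every `x*`. -/
theorem fitz_ge_pairing_of_mem_closure_dom
    {X : Type*} [NormedAddCommGroup X] [NormedSpace ℝ X] [CompleteSpace X]
    (A : X → Set (StrongDual ℝ X)) (hA : IsMaxMonotoneOp A) (hAlin : IsLinearRelation A)
    (f : X → EReal) (hproper : EProper f) (hconv : EConvex f)
    (hlsc : LowerSemicontinuous f)
    (x : X) (hx₁ : x ∈ closure (domOp A)) (hx₂ : x ∈ interior (domOp (subdiff f))) :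
    ∀ xs : StrongDual ℝ X, ((xs x : ℝ) : EReal) ≤ fitz (opSum A (subdiff f)) (x, xs) := by
  intro xs
  by_contra hcon
  have hFlt : fitz (opSum A (subdiff f)) (x, xs) < ((xs x : ℝ) : EReal) := not_le.mp hcon
  obtain ⟨S, hS⟩ := hAlin
  have hgraA : ∀ p : X × StrongDual ℝ X, p ∈ gra A ↔ p ∈ S := fun p => by
    rw [← hS]; exact Iff.rfl
  -- radius r around x inside dom ∂f
  obtain ⟨r, hr0, hrsub⟩ :=
    Metric.nhds_basis_closedBall.mem_iff.1 (mem_interior_iff_mem_nhds.1 hx₂)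
  have hne_top : ∀ y ∈ Metric.closedBall x r, f y ≠ ⊤ := fun y hy =>
    aux_fy_ne_top hproper (hrsub hy)
  -- Baire category argument
  set Fn : ℕ → Set X := fun n =>
    (f ⁻¹' Iic ((n : ℝ) : EReal) ∩ Metric.closedBall x r) ∪ (Metric.ball x r)ᶜ with hFn
  have hFnclosed : ∀ n, IsClosed (Fn n) := fun n =>
    ((hlsc.isClosed_preimage _).inter Metric.isClosed_closedBall).union
      Metric.isOpen_ball.isClosed_compl
  have hcover : (⋃ n, Fn n) = univ := by
    ext y
    simp only [mem_iUnion, mem_univ, iff_true]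
    by_cases hy : y ∈ Metric.ball x r
    · have hyc : y ∈ Metric.closedBall x r := Metric.ball_subset_closedBall hy
      have hyt : f y ≠ ⊤ := hne_top y hyc
      refine ⟨⌈(f y).toReal⌉₊, Or.inl ⟨?_, hyc⟩⟩
      have h1 : f y ≤ ((f y).toReal : EReal) := EReal.le_coe_toReal hyt
      exact h1.trans (EReal.coe_le_coe_iff.2 (Nat.le_ceil _))
    · exact ⟨0, Or.inr hy⟩
  have hdense := dense_iUnion_interior_of_closed hFnclosed hcover
  obtain ⟨z₁, hz₁ball, hz₁U⟩ := hdense.inter_open_nonempty (Metric.ball x (r/4))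
    Metric.isOpen_ball ⟨x, Metric.mem_ball_self (by linarith)⟩
  obtain ⟨n, hz₁n⟩ := mem_iUnion.1 hz₁U
  obtain ⟨η, hη0, hballsub⟩ :=
    Metric.mem_nhds_iff.1 (mem_interior_iff_mem_nhds.1 hz₁n)
  set η' := min η (r/2) with hη'
  have hη'0 : 0 < η' := lt_min hη0 (by linarith)
  have hub : ∀ v ∈ Metric.ball z₁ η', f v ≤ ((n : ℝ) : EReal) := by
    intro v hv
    have hv1 : v ∈ Metric.ball z₁ η := Metric.ball_subset_ball (min_le_left _ _) hv
    have hvF : v ∈ Fn n := hballsub hv1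
    have hvball : v ∈ Metric.ball x r := by
      have h1 : dist v x ≤ dist v z₁ + dist z₁ x := dist_triangle _ _ _
      have h2 : dist v z₁ < r/2 := lt_of_lt_of_le (Metric.mem_ball.1 hv) (min_le_right _ _)
      have h3 : dist z₁ x < r/4 := Metric.mem_ball.1 hz₁ball
      exact Metric.mem_ball.2 (by linarith)
    rcases hvF with ⟨h1, _⟩ | h2
    · exact h1
    · exact absurd hvball h2
  -- upper bound on a ball around x
  set ε₂ := η'/2 with hε₂def
  have hε₂0 : 0 < ε₂ := by positivity
  set y₁ := (2:ℝ) • x - z₁ with hy₁def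
  have hy₁r : y₁ ∈ Metric.closedBall x r := by
    have : y₁ - x = x - z₁ := by rw [hy₁def]; module
    rw [Metric.mem_closedBall, dist_eq_norm, this, ← dist_eq_norm]
    have h3 : dist z₁ x < r/4 := Metric.mem_ball.1 hz₁ball
    rw [dist_comm] at h3
    linarith
  have hy₁top : f y₁ ≠ ⊤ := hne_top _ hy₁r
  set M := (n : ℝ)/2 + (f y₁).toReal/2 with hMdef
  have hM : ∀ z ∈ Metric.ball x ε₂, f z ≠ ⊤ ∧ (f z).toReal ≤ M := by
    intro z hz
    set u := (2:ℝ) • z - y₁ with hudef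
    have hu : u ∈ Metric.ball z₁ η' := by
      have he : u - z₁ = (2:ℝ) • (z - x) := by rw [hudef, hy₁def]; module
      rw [Metric.mem_ball, dist_eq_norm, he, norm_smul]
      have : ‖z - x‖ < ε₂ := by rw [← dist_eq_norm]; exact Metric.mem_ball.1 hz
      simp only [Real.norm_ofNat]
      rw [hε₂def] at this; linarith
    have hutop : f u ≠ ⊤ := ne_top_of_le_ne_top (EReal.coe_ne_top _) (hub u hu)
    have huval : (f u).toReal ≤ n := by
      have h := hub u hu
      rw [← EReal.coe_toReal hutop (hproper.2 u), EReal.coe_le_coe_iff] at h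
      exact h
    have hz' : z = (1/2 : ℝ) • u + (1/2 : ℝ) • y₁ := by rw [hudef]; module
    have hmid := aux_mid hproper hconv hutop hy₁top
    rw [← hz'] at hmid
    exact ⟨hmid.1, by rw [hMdef]; linarith [hmid.2]⟩
  set rx := (f x).toReal with hrx
  have hxball : x ∈ Metric.ball x ε₂ := Metric.mem_ball_self hε₂0
  have hrxM : rx ≤ M := (hM x hxball).2
  have hlow : ∀ z ∈ Metric.ball x ε₂, 2*rx - M ≤ (f z).toReal := by
    intro z hz
    set w := (2:ℝ) • x - z with hwdef
    have hw : w ∈ Metric.ball x ε₂ := by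
      have he : w - x = x - z := by rw [hwdef]; module
      rw [Metric.mem_ball, dist_eq_norm, he, ← dist_eq_norm, dist_comm]
      exact Metric.mem_ball.1 hz
    have hid : x = (1/2 : ℝ) • z + (1/2 : ℝ) • w := by rw [hwdef]; module
    have hmid := aux_mid hproper hconv (hM z hz).1 (hM w hw).1
    rw [← hid] at hmid
    have h1 := hmid.2
    have h2 := (hM w hw).2
    rw [← hrx] at h1
    linarith
  -- subgradient norm bound
  set K := 2*M - 2*rx with hKdef
  have hK0 : 0 ≤ K := by linarith
  set L := (4/ε₂) * K with hLdef
  have hL0 : 0 ≤ L := by positivity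
  have hLbd : ∀ a ∈ Metric.ball x (ε₂/2), ∀ bs ∈ subdiff f a, ‖bs‖ ≤ L := by
    intro a ha bs hbs
    have ha' : a ∈ Metric.ball x ε₂ :=
      Metric.ball_subset_ball (by linarith) ha
    refine ContinuousLinearMap.opNorm_le_bound bs hL0 fun z => ?_
    rcases eq_or_ne z 0 with rfl | hz0
    · simp
    have hznorm : 0 < ‖z‖ := norm_pos_iff.2 hz0
    set d := (ε₂/(4*‖z‖)) • z with hd
    have hdnorm : ‖d‖ = ε₂/4 := by
      rw [hd, norm_smul, Real.norm_eq_abs, abs_of_pos (by positivity)]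
      field_simp
    have key : ∀ e : X, ‖e‖ = ε₂/4 → bs e ≤ K := by
      intro e he
      have hae : a + e ∈ Metric.ball x ε₂ := by
        rw [Metric.mem_ball, dist_eq_norm]
        have h1 : ‖a + e - x‖ ≤ ‖a - x‖ + ‖e‖ := by
          have : a + e - x = (a - x) + e := by abel
          rw [this]; exact norm_add_le _ _
        have h2 : ‖a - x‖ < ε₂/2 := by rw [← dist_eq_norm]; exact Metric.mem_ball.1 ha
        linarith [he ▸ h1]
      have h1 := aux_subgrad hproper hbs (hM a ha').1 (hM (a+e) hae).1
      rw [add_sub_cancel_left] at h1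
      have h2 := (hM (a+e) hae).2
      have h3 := hlow a ha'
      rw [hKdef]; linarith
    have h2 := key d hdnorm
    have h3 := key (-d) (by rw [norm_neg]; exact hdnorm)
    rw [map_neg] at h3
    have habs : |bs d| ≤ K := abs_le.2 ⟨by linarith, h2⟩
    have hzd : z = ((4*‖z‖)/ε₂) • d := by
      rw [hd, smul_smul, show (4*‖z‖)/ε₂ * (ε₂/(4*‖z‖)) = 1 by field_simp, one_smul]
    have hbsz : bs z = ((4*‖z‖)/ε₂) * (bs d) := by
      conv_lhs => rw [hzd]
      rw [map_smul, smul_eq_mul]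
    rw [Real.norm_eq_abs, hbsz, abs_mul, abs_of_pos (by positivity)]
    calc 4 * ‖z‖ / ε₂ * |bs d| ≤ 4 * ‖z‖ / ε₂ * K :=
          mul_le_mul_of_nonneg_left habs (by positivity)
      _ = 4 / ε₂ * K * ‖z‖ := by ring
      _ = L * ‖z‖ := by rw [hLdef]
  -- extract the gap δ
  set F := fitz (opSum A (subdiff f)) (x, xs) with hFdef
  have hterm : ∀ q ∈ gra (opSum A (subdiff f)),
      ((xs q.1 + q.2 x - q.2 q.1 : ℝ) : EReal) ≤ F := by
    intro q hq
    rw [hFdef]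
    simp only [fitz]
    exact le_iSup₂ (f := fun q (_ : q ∈ gra (opSum A (subdiff f))) =>
      ((xs q.1 + q.2 x - q.2 q.1 : ℝ) : EReal)) q hq
  obtain ⟨a₀, ha₀A, ha₀d⟩ := Metric.mem_closure_iff.1 hx₁ (min r 1) (by positivity)
  have ha₀r : a₀ ∈ Metric.closedBall x r := by
    rw [Metric.mem_closedBall, dist_comm]
    exact le_of_lt (lt_of_lt_of_le ha₀d (min_le_left _ _))
  obtain ⟨bs₀, hbs₀⟩ := hrsub ha₀r
  obtain ⟨as₀, has₀⟩ := ha₀A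
  have hq₀ : ((a₀, as₀ + bs₀) : X × StrongDual ℝ X) ∈ gra (opSum A (subdiff f)) :=
    Set.add_mem_add has₀ hbs₀
  have hbot : (⊥ : EReal) < F := lt_of_lt_of_le (EReal.bot_lt_coe _) (hterm _ hq₀)
  have htop : F ≠ ⊤ := (hFlt.trans (EReal.coe_lt_top _)).ne
  set Fr := F.toReal with hFrdef
  have hFeq : (Fr : EReal) = F := EReal.coe_toReal htop hbot.ne'
  obtain ⟨δ, hδ, hFrδ⟩ : ∃ δ : ℝ, 0 < δ ∧ Fr = xs x - δ := by
    refine ⟨xs x - Fr, ?_, by ring⟩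
    rw [← hFeq] at hFlt
    linarith [EReal.coe_lt_coe_iff.1 hFlt]
  have hterm' : ∀ q ∈ gra (opSum A (subdiff f)), xs q.1 + q.2 x - q.2 q.1 ≤ xs x - δ :=
    fun q hq => hFrδ ▸ EReal.coe_le_coe_iff.1 (hFeq ▸ hterm q hq)
  -- the key local estimate
  obtain ⟨ρ, hρ0, hρ1, hρ2, hρ3⟩ :
      ∃ ρ : ℝ, 0 < ρ ∧ ρ ≤ ε₂/2 ∧ ρ ≤ r ∧ (‖xs‖ + L) * ρ ≤ δ/2 := by
    refine ⟨min (min (ε₂/2) r) (δ/(2*(‖xs‖ + L + 1))),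
      lt_min (lt_min (by positivity) hr0) (div_pos hδ (by positivity)),
      le_trans (min_le_left _ _) (min_le_left _ _),
      le_trans (min_le_left _ _) (min_le_right _ _), ?_⟩
    have hm_le : min (min (ε₂/2) r) (δ/(2*(‖xs‖ + L + 1))) ≤ δ/(2*(‖xs‖ + L + 1)) :=
      min_le_right _ _
    have hnn : 0 ≤ ‖xs‖ + L := by positivity
    have hstep := mul_le_mul_of_nonneg_left hm_le hnn
    refine le_trans hstep ?_
    have heq : (‖xs‖ + L) * (δ/(2*(‖xs‖ + L + 1))) = δ * ((‖xs‖ + L)/(2*(‖xs‖ + L + 1))) := by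
      ring
    have hfrac : (‖xs‖ + L)/(2*(‖xs‖ + L + 1)) ≤ 1/2 := by
      rw [div_le_div_iff₀ (by positivity) (by norm_num)]
      linarith
    rw [heq]
    calc δ * ((‖xs‖ + L)/(2*(‖xs‖ + L + 1))) ≤ δ * (1/2) :=
          mul_le_mul_of_nonneg_left hfrac hδ.le
      _ = δ/2 := by ring
  have hψ : ∀ a, ∀ as ∈ A a, ‖a - x‖ < ρ → δ/2 ≤ as (a - x) := by
    intro a as has hnear
    have haball : a ∈ Metric.ball x (ε₂/2) := by
      rw [Metric.mem_ball, dist_eq_norm]; linarith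
    have har : a ∈ Metric.closedBall x r := by
      rw [Metric.mem_closedBall, dist_eq_norm]; linarith
    obtain ⟨bs, hbs⟩ := hrsub har
    have hbsL : ‖bs‖ ≤ L := hLbd a haball bs hbs
    have ht := hterm' (a, as + bs) (Set.add_mem_add has hbs)
    simp only [ContinuousLinearMap.add_apply] at ht
    have hmix : (‖xs‖ + L) * ‖a - x‖ ≤ δ/2 :=
      le_trans (mul_le_mul_of_nonneg_left hnear.le (by positivity)) hρ3
    have hexpand : (‖xs‖ + L) * ‖a - x‖ = ‖xs‖ * ‖a - x‖ + L * ‖a - x‖ := by ring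
    have h1 : |xs (a - x)| ≤ ‖xs‖ * ‖a - x‖ := by
      rw [← Real.norm_eq_abs]; exact xs.le_opNorm _
    have h2 : |bs (a - x)| ≤ L * ‖a - x‖ := by
      rw [← Real.norm_eq_abs]
      exact le_trans (bs.le_opNorm _) (mul_le_mul_of_nonneg_right hbsL (norm_nonneg _))
    have e1 : xs (a - x) = xs a - xs x := map_sub _ _ _
    have e2 : bs (a - x) = bs a - bs x := map_sub _ _ _
    have e3 : as (a - x) = as a - as x := map_sub _ _ _
    rw [e1] at h1
    rw [e2] at h2
    rw [e3]
    have habs1 := abs_le.1 h1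
    have habs2 := abs_le.1 h2
    linarith [habs1.1, habs1.2, habs2.1, habs2.2]
  -- the convex set C и separation
  set C : Set (X × ℝ) := {p | ∃ as, as ∈ A p.1 ∧ as (p.1 - x) ≤ p.2} with hCdef
  have hCconv : Convex ℝ C := by
    rintro ⟨a, t⟩ ⟨as, has, hat⟩ ⟨b, t'⟩ ⟨bs, hbt', hbt⟩ lam mu hlam hmu hlm
    have hmu' : mu = 1 - lam := by linarith
    subst hmu'
    have hpt : lam • ((a, t) : X × ℝ) + (1 - lam) • ((b, t') : X × ℝ)
        = (lam • a + (1 - lam) • b, lam * t + (1 - lam) * t') := rfl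
    rw [hpt]
    refine ⟨lam • as + (1 - lam) • bs, ?_, ?_⟩
    · have hmem : lam • ((a, as) : X × StrongDual ℝ X) + (1 - lam) • ((b, bs) : X × StrongDual ℝ X) ∈ S :=
        S.add_mem (S.smul_mem _ ((hgraA _).1 has)) (S.smul_mem _ ((hgraA _).1 hbt'))
      have hg := (hgraA _).2 hmem
      exact hg
    · show (lam • as + (1 - lam) • bs) ((lam • a + (1 - lam) • b) - x)
          ≤ lam * t + (1 - lam) * t'
      have hmono := hA.1 (a, as) has (b, bs) hbt'
      simp only [ContinuousLinearMap.sub_apply] at hmono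
      have hat' : as a - as x ≤ t := by rw [map_sub] at hat; exact hat
      have hbt2 : bs b - bs x ≤ t' := by rw [map_sub] at hbt; exact hbt
      have hmono' : 0 ≤ as a - as b - (bs a - bs b) := by
        have h := hmono
        rw [map_sub, map_sub] at h
        linarith
      have hexp : (lam • as + (1 - lam) • bs) ((lam • a + (1 - lam) • b) - x)
          = lam * (as a - as x) + (1 - lam) * (bs b - bs x)
            - lam * (1 - lam) * (as a - as b - (bs a - bs b)) := by
        simp only [ContinuousLinearMap.add_apply, ContinuousLinearMap.smul_apply,
          map_sub, map_add, map_smul, smul_eq_mul]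
        ring
      rw [hexp]
      have h1 := mul_le_mul_of_nonneg_left hat' hlam
      have h2 := mul_le_mul_of_nonneg_left hbt2 hmu
      have h3 := mul_nonneg (mul_nonneg hlam hmu) hmono'
      linarith [h1, h2, h3]
  have hxnot : ((x, (0:ℝ)) : X × ℝ) ∉ closure C := by
    intro hmem
    obtain ⟨p, hpC, hpd⟩ := Metric.mem_closure_iff.1 hmem (min ρ (δ/2))
      (lt_min hρ0 (by linarith))
    obtain ⟨as, has, hle⟩ := hpC
    rw [Prod.dist_eq] at hpd
    have hd1 : dist x p.1 < ρ :=
      lt_of_le_of_lt (le_max_left _ _) (lt_of_lt_of_le hpd (min_le_left _ _))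
    have hd2 : dist (0:ℝ) p.2 < δ/2 :=
      lt_of_le_of_lt (le_max_right _ _) (lt_of_lt_of_le hpd (min_le_right _ _))
    have hnear : ‖p.1 - x‖ < ρ := by rw [← dist_eq_norm, dist_comm]; exact hd1
    have hψ1 := hψ p.1 as has hnear
    have habs : |p.2| < δ/2 := by
      rw [Real.dist_eq, zero_sub, abs_neg] at hd2; exact hd2
    have := abs_lt.1 habs
    linarith
  obtain ⟨G, u, hGlt, hGx⟩ :=
    geometric_hahn_banach_closed_point hCconv.closure isClosed_closure hxnot
  have hGC : ∀ p ∈ C, G p < u := fun p hp => hGlt p (subset_closure hp)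
  set s := G ((0:X), (1:ℝ)) with hsdef
  set w : X →L[ℝ] ℝ := G.comp (ContinuousLinearMap.inl ℝ X ℝ) with hwdef
  have hwapp : ∀ y : X, w y = G (y, 0) := fun y => by
    rw [hwdef]; simp [ContinuousLinearMap.comp_apply]
  have hsplit : ∀ p : X × ℝ, G p = w p.1 + p.2 * s := by
    intro p
    have hp : p = (p.1, (0:ℝ)) + p.2 • ((0:X), (1:ℝ)) := by
      ext
      · simp
      · simp
    rw [hwapp]
    conv_lhs => rw [hp]
    rw [map_add, map_smul, smul_eq_mul]
  have hzeroA : ((0:X), (0 : StrongDual ℝ X)) ∈ gra A := (hgraA _).2 S.zero_mem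
  have h00 : (((0:X), (0:ℝ)) : X × ℝ) ∈ C := ⟨0, hzeroA, by simp⟩
  have hCup : ∀ (a : X) (as : StrongDual ℝ X), as ∈ A a → ((a, as (a - x)) : X × ℝ) ∈ C :=
    fun a as h => ⟨as, h, le_refl _⟩
  have hsle : s ≤ 0 := by
    by_contra hpos
    push_neg at hpos
    have htmem : (((0:X), (|u|+1)/s) : X × ℝ) ∈ C := by
      refine ⟨0, hzeroA, ?_⟩
      simp only [ContinuousLinearMap.zero_apply]
      exact div_nonneg (by positivity) hpos.le
    have hlt := hGC _ htmem
    rw [hsplit] at hlt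
    simp only [map_zero, zero_add] at hlt
    rw [div_mul_cancel₀ _ (ne_of_gt hpos)] at hlt
    linarith [le_abs_self u]
  rcases lt_or_eq_of_le hsle with hsneg | hs0
  · -- s < 0 : build the monotone extension
    set wt : StrongDual ℝ X := (-s)⁻¹ • w with hwt
    have hrel : ∀ a, ∀ as ∈ A a, 0 ≤ (wt - as) (x - a) := by
      intro a as has
      have h1 : w a + as (a - x) * s < u := by
        have h0 := hGC _ (hCup a as has)
        rw [hsplit] at h0
        exact h0
      have h2 : u < w x := by
        have := hGx
        rw [hsplit] at this
        simpa using this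
      have hspos : 0 < -s := neg_pos.2 hsneg
      have hexp : (wt - as) (x - a) = (-s)⁻¹ * (w x - w a) - (as x - as a) := by
        rw [hwt]
        simp only [ContinuousLinearMap.sub_apply, ContinuousLinearMap.smul_apply,
          map_sub, smul_eq_mul]
        ring
      rw [hexp]
      have hQ : as (a - x) = as a - as x := map_sub _ _ _
      rw [hQ] at h1
      have hkey : 0 < (w x - w a) - (as a - as x) * s := by nlinarith
      have hpos2 : 0 < (-s)⁻¹ * ((w x - w a) - (as a - as x) * s) :=
        mul_pos (inv_pos.2 hspos) hkey
      have hsne : s ≠ 0 := ne_of_lt hsneg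
      have heq2 : (-s)⁻¹ * ((w x - w a) - (as a - as x) * s)
          = (-s)⁻¹ * (w x - w a) - (as x - as a) := by
        field_simp
        ring
      linarith [heq2 ▸ hpos2]
    set B : X → Set (StrongDual ℝ X) := fun y => A y ∪ {zs | y = x ∧ zs = wt} with hBdef
    have hBmono : IsMonotoneOp B := by
      rintro ⟨p1, p2⟩ hp ⟨q1, q2⟩ hq
      have hp' : p2 ∈ A p1 ∨ (p1 = x ∧ p2 = wt) := hp
      have hq' : q2 ∈ A q1 ∨ (q1 = x ∧ q2 = wt) := hq
      rcases hp' with hp' | hpx <;> rcases hq' with hq' | hqx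
      · exact hA.1 (p1, p2) hp' (q1, q2) hq'
      · have h := hrel p1 p2 hp'
        show 0 ≤ (p2 - q2) (p1 - q1)
        rw [hqx.1, hqx.2]
        have heq : (p2 - wt) (p1 - x) = (wt - p2) (x - p1) := by
          simp only [ContinuousLinearMap.sub_apply, map_sub]
          ring
        rw [heq]
        exact h
      · show 0 ≤ (p2 - q2) (p1 - q1)
        rw [hpx.1, hpx.2]
        exact hrel q1 q2 hq'
      · show 0 ≤ (p2 - q2) (p1 - q1)
        rw [hpx.1, hpx.2, hqx.1, hqx.2]
        simp
    have hgeq := hA.2 B hBmono (fun p hp => Or.inl hp)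
    have hxA : wt ∈ A x := by
      have hmem : ((x, wt) : X × StrongDual ℝ X) ∈ gra B := Or.inr ⟨rfl, rfl⟩
      rw [hgeq] at hmem
      exact hmem
    have hx0 : (((x:X), (0:ℝ)) : X × ℝ) ∈ C := ⟨wt, hxA, by simp⟩
    exact absurd (hGC _ hx0) (not_lt.2 (le_of_lt hGx))
  · -- s = 0
    have hvan : ∀ a ∈ domOp A, w a = 0 := by
      rintro a ⟨as, has⟩
      by_contra hne
      set c := (|u|+1)/(w a) with hcdef
      have hmemS : c • ((a, as) : X × StrongDual ℝ X) ∈ S := S.smul_mem _ ((hgraA _).1 has)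
      have hcA : c • as ∈ A (c • a) := by
        have hg := (hgraA _).2 hmemS
        simpa [gra, Prod.smul_mk] using hg
      have hCm := hCup (c • a) (c • as) hcA
      have hlt : w (c • a) + ((c • as) ((c • a) - x)) * s < u := by
        have h0 := hGC _ hCm
        rw [hsplit] at h0
        exact h0
      rw [hs0, mul_zero, add_zero, map_smul, smul_eq_mul, hcdef,
        div_mul_cancel₀ _ hne] at hlt
      linarith [le_abs_self u]
    have hwx : w x = 0 := by
      have hclosed : IsClosed {y : X | w y = 0} := isClosed_eq w.continuous continuous_const
      exact closure_minimal hvan hclosed hx₁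
    have h1 := hGC _ h00
    rw [hsplit] at h1
    simp only [map_zero, zero_add, zero_mul] at h1
    have h2 := hGx
    rw [hsplit] at h2
    simp only [zero_mul, add_zero, hwx] at h2
    linarith
end

section
/- Let X be a real Banach space, let A: X ⇉ X* be a maximally monotone linear relation, let z belong to the norm closure of dom A, and let z* ∈ X* be such that (z, z*) ∉ gra A. Then for every ε > 0 there exists (a, a*) ∈ gra A with ‖a − z‖ < ε and ⟨z, a*⟩ + ⟨a, z*⟩ − ⟨a, a*⟩ > ⟨z, z*⟩ (equivalently, ⟨z − a, z* − a*⟩ < 0). -/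
open NormedSpace Set Pointwise

variable {X : Type*} [NormedAddCommGroup X] [NormedSpace ℝ X]

section AuxiliaryLemmas

variable {X : Type*} [NormedAddCommGroup X] [NormedSpace ℝ X]

/-- If a pair is monotonically related to the whole graph of a maximally monotone
operator, then it belongs to the graph. -/
lemma mem_gra_of_rel (A : X → Set (StrongDual ℝ X)) (hA : IsMaxMonotoneOp A)
    (w : X × StrongDual ℝ X) (hw : ∀ p ∈ gra A, 0 ≤ (w.2 - p.2) (w.1 - p.1)) :
    w ∈ gra A := by
  classical
  set B : X → Set (StrongDual ℝ X) := fun x => A x ∪ {vs | (x, vs) = w} with hB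
  have hgraB : gra B = gra A ∪ {w} := by
    ext p
    simp only [gra, hB, Set.mem_setOf_eq, Set.mem_union, Set.mem_singleton_iff]
  have key : ∀ u v : X × StrongDual ℝ X, (u.2 - v.2) (u.1 - v.1) = (v.2 - u.2) (v.1 - u.1) := by
    intro u v
    simp only [ContinuousLinearMap.sub_apply, map_sub]
    ring
  have hmonoB : IsMonotoneOp B := by
    intro p hp q hq
    rw [hgraB, Set.mem_union, Set.mem_singleton_iff] at hp hq
    rcases hp with hp | hp <;> rcases hq with hq | hq
    · exact hA.1 p hp q hq
    · subst hq
      rw [key]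
      exact hw p hp
    · subst hp
      exact hw q hq
    · subst hp
      subst hq
      simp
  have hsub : gra A ⊆ gra B := by
    rw [hgraB]
    exact Set.subset_union_left
  have heq := hA.2 B hmonoB hsub
  have : w ∈ gra B := by
    rw [hgraB]
    exact Or.inr rfl
  rwa [heq] at this

end AuxiliaryLemmas

set_option maxHeartbeats 1000000 in
/-- If `A` is a maximally monotone linear relation, `z` lies in the norm closure of
`dom A` and `(z, z*) ∉ gra A`, then there are points `(a, a*) ∈ gra A` with `a`
arbitrarily close to `z` such that `⟨z,a*⟩ + ⟨a,z*⟩ − ⟨a,a*⟩ > ⟨z,z*⟩`. -/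
theorem exists_graph_point_violating
    {X : Type*} [NormedAddCommGroup X] [NormedSpace ℝ X] [CompleteSpace X]
    (A : X → Set (StrongDual ℝ X)) (hA : IsMaxMonotoneOp A) (hAlin : IsLinearRelation A)
    (z : X) (zs : StrongDual ℝ X) (hz : z ∈ closure (domOp A)) (hzs : (z, zs) ∉ gra A) :
    ∀ ε : ℝ, 0 < ε → ∃ q ∈ gra A, ‖q.1 - z‖ < ε ∧
      zs z < q.2 z + zs q.1 - q.2 q.1 := by
  obtain ⟨S, hS⟩ := hAlin
  by_contra hcon
  push_neg at hcon
  obtain ⟨ε, hε, Hloc⟩ := hcon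
  -- membership transfer between `gra A` and `S`
  have memS : ∀ p : X × StrongDual ℝ X, p ∈ gra A ↔ p ∈ S := by
    intro p
    rw [← hS]
    exact Iff.rfl
  -- a point of the domain near `z`
  obtain ⟨x₁, hx₁dom, hx₁dist⟩ := Metric.mem_closure_iff.mp hz ε hε
  obtain ⟨x₁s, hx₁s⟩ := hx₁dom
  have hχ₁ : ((x₁, x₁s) : X × StrongDual ℝ X) ∈ gra A := hx₁s
  have hχ₁ball : ‖x₁ - z‖ < ε := by
    rw [← dist_eq_norm, dist_comm]
    exact hx₁dist
  -- the open convex set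
  set U : Set (X × ℝ) := (Prod.fst ⁻¹' Metric.ball z ε) ∩ {v | zs z < zs v.1 + v.2} with hU
  have hUopen : IsOpen U := by
    apply IsOpen.inter
    · exact Metric.isOpen_ball.preimage continuous_fst
    · exact isOpen_lt continuous_const ((zs.continuous.comp continuous_fst).add continuous_snd)
  have hUconvex : Convex ℝ U := by
    apply Convex.inter
    · exact (convex_ball z ε).linear_preimage (LinearMap.fst ℝ X ℝ)
    · have hlin : IsLinearMap ℝ (fun v : X × ℝ => zs v.1 + v.2) := by
        constructor
        · intro v w
          simp only [Prod.fst_add, Prod.snd_add, map_add]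
          ring
        · intro c v
          simp only [Prod.smul_fst, Prod.smul_snd, map_smul, smul_eq_mul]
          ring
      exact convex_halfSpace_gt hlin (zs z)
  -- the convex subgraph of k over the graph of A
  set C : Set (X × ℝ) := {v | ∃ p ∈ gra A, p.1 = v.1 ∧ v.2 ≤ p.2 z - p.2 p.1} with hC
  -- concavity-type combination identity
  have kcomb : ∀ (a b : ℝ), a + b = 1 → ∀ p p' : X × StrongDual ℝ X,
      (a • p + b • p').2 z - (a • p + b • p').2 (a • p + b • p').1
        = a * (p.2 z - p.2 p.1) + b * (p'.2 z - p'.2 p'.1)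
          + a * b * ((p.2 - p'.2) (p.1 - p'.1)) := by
    intro a b hab p p'
    have hb : b = 1 - a := by linarith
    subst hb
    simp only [Prod.snd_add, Prod.smul_snd, Prod.fst_add, Prod.smul_fst,
      ContinuousLinearMap.add_apply, ContinuousLinearMap.coe_smul', Pi.smul_apply,
      ContinuousLinearMap.sub_apply, map_add, map_smul, map_sub, smul_eq_mul]
    ring
  have hCconvex : Convex ℝ C := by
    rintro v ⟨p, hp, hp1, hpk⟩ v' ⟨p', hp', hp1', hpk'⟩ a b ha hb hab
    refine ⟨a • p + b • p', ?_, ?_, ?_⟩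
    · rw [memS]
      exact S.add_mem (S.smul_mem a ((memS p).mp hp)) (S.smul_mem b ((memS p').mp hp'))
    · simp only [Prod.fst_add, Prod.smul_fst, hp1, hp1']
    · have hcomb := kcomb a b hab p p'
      have hmono := hA.1 p hp p' hp'
      have h1 : a * v.2 ≤ a * (p.2 z - p.2 p.1) := mul_le_mul_of_nonneg_left hpk ha
      have h2 : b * v'.2 ≤ b * (p'.2 z - p'.2 p'.1) := mul_le_mul_of_nonneg_left hpk' hb
      have h3 : 0 ≤ a * b * ((p.2 - p'.2) (p.1 - p'.1)) :=
        mul_nonneg (mul_nonneg ha hb) hmono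
      have hsnd : (a • v + b • v').2 = a * v.2 + b * v'.2 := by
        simp [Prod.snd_add, Prod.smul_snd, smul_eq_mul]
      rw [hsnd, hcomb]
      linarith
  -- disjointness from the local hypothesis
  have hdisj : Disjoint U C := by
    rw [Set.disjoint_left]
    rintro v ⟨hv1, hv2⟩ ⟨p, hp, hp1, hpk⟩
    have hball : ‖p.1 - z‖ < ε := by
      rw [hp1, ← dist_eq_norm]
      exact Metric.mem_ball.mp hv1
    have hH := Hloc p hp hball
    rw [hp1] at hH
    simp only [Set.mem_setOf_eq] at hv2
    have hpk' : v.2 ≤ p.2 z - p.2 p.1 := hpk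
    rw [hp1] at hpk'
    linarith
  -- separation
  obtain ⟨f, u, hfU, hfC⟩ := geometric_hahn_banach_open hUconvex hUopen hCconvex hdisj
  -- decomposition of f
  have hfdec : ∀ (y : X) (r : ℝ), f (y, r) = f (y, 0) + r * f (0, 1) := by
    intro y r
    have hyr : ((y, r) : X × ℝ) = (y, 0) + r • ((0 : X), (1 : ℝ)) := by
      simp [Prod.ext_iff]
    rw [hyr, map_add, map_smul, smul_eq_mul]
  set s : ℝ := f (0, 1) with hs
  -- points (z, r) for r > 0 lie in U
  have hfzr : ∀ r : ℝ, 0 < r → f (z, 0) + r * s < u := by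
    intro r hr
    have hmem : ((z, r) : X × ℝ) ∈ U := by
      constructor
      · exact Metric.mem_ball_self hε
      · simp only [Set.mem_setOf_eq]
        linarith
    have := hfU (z, r) hmem
    rwa [hfdec] at this
  have hs_le : s ≤ 0 := by
    by_contra h
    push_neg at h
    set r₀ : ℝ := (|u - f (z, 0)| + 1) / s with hr₀
    have hr₀pos : 0 < r₀ := by
      apply div_pos
      · positivity
      · exact h
    have h1 := hfzr r₀ hr₀pos
    have h2 : r₀ * s = |u - f (z, 0)| + 1 := by
      rw [hr₀, div_mul_cancel₀ _ (ne_of_gt h)]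
    rw [h2] at h1
    have := le_abs_self (u - f (z, 0))
    linarith
  have hfz0_le : f (z, 0) ≤ u := by
    rcases hs_le.lt_or_eq with hslt | hseq
    · by_contra h
      push_neg at h
      have hsne : s ≠ 0 := ne_of_lt hslt
      set r₀ : ℝ := (u - f (z, 0)) / s with hr₀
      have hr₀pos : 0 < r₀ :=
        div_pos_iff.mpr (Or.inr ⟨by linarith, hslt⟩)
      have h1 := hfzr r₀ hr₀pos
      have h2 : r₀ * s = u - f (z, 0) := by
        rw [hr₀, div_mul_cancel₀ _ hsne]
      rw [h2] at h1
      linarith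
    · have h1 := hfzr 1 one_pos
      rw [hseq, mul_zero, add_zero] at h1
      linarith
  have hs_neg : s < 0 := by
    rcases hs_le.lt_or_eq with hslt | hseq
    · exact hslt
    · exfalso
      have hCx₁ : ((x₁, x₁s z - x₁s x₁) : X × ℝ) ∈ C :=
        ⟨(x₁, x₁s), hχ₁, rfl, le_refl _⟩
      have h1 := hfC _ hCx₁
      rw [hfdec, hseq, mul_zero, add_zero] at h1
      have hUx₁ : ((x₁, zs z - zs x₁ + 1) : X × ℝ) ∈ U := by
        constructor
        · simp only [Set.mem_preimage, Metric.mem_ball, dist_eq_norm]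
          exact hχ₁ball
        · simp only [Set.mem_setOf_eq]
          linarith
      have h2 := hfU _ hUx₁
      rw [hfdec, hseq, mul_zero, add_zero] at h2
      linarith
  have hsne : s ≠ 0 := ne_of_lt hs_neg
  -- the candidate functional
  set V : StrongDual ℝ X := s⁻¹ • (f.comp (ContinuousLinearMap.inl ℝ X ℝ)) with hV
  have hVapp : ∀ y : X, V y = s⁻¹ * f (y, 0) := by
    intro y
    rw [hV]
    simp [ContinuousLinearMap.smul_apply, ContinuousLinearMap.comp_apply,
      ContinuousLinearMap.inl_apply, smul_eq_mul]
  -- (z, V) is monotonically related to gra A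
  have hVrel : ∀ p ∈ gra A, 0 ≤ (V - p.2) (z - p.1) := by
    intro p hp
    have hCp : ((p.1, p.2 z - p.2 p.1) : X × ℝ) ∈ C := ⟨p, hp, rfl, le_refl _⟩
    have h1 := hfC _ hCp
    rw [hfdec] at h1
    have h2 : f (z, 0) ≤ f (p.1, 0) + (p.2 z - p.2 p.1) * s := le_trans hfz0_le h1
    have h3 : s⁻¹ * (f (z, 0) - f (p.1, 0) - (p.2 z - p.2 p.1) * s)
        = s⁻¹ * f (z, 0) - s⁻¹ * f (p.1, 0) - (p.2 z - p.2 p.1) := by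
      field_simp
    have h4 : 0 ≤ s⁻¹ * f (z, 0) - s⁻¹ * f (p.1, 0) - (p.2 z - p.2 p.1) := by
      rw [← h3]
      have hx : (0:ℝ) ≤ -s⁻¹ := by
        have : s⁻¹ ≤ 0 := inv_nonpos.mpr hs_le
        linarith
      have hy : (0:ℝ) ≤ -(f (z, 0) - f (p.1, 0) - (p.2 z - p.2 p.1) * s) := by linarith
      nlinarith [mul_nonneg hx hy]
    have h5 : (V - p.2) (z - p.1) = V z - V p.1 - (p.2 z - p.2 p.1) := by
      simp only [ContinuousLinearMap.sub_apply, map_sub]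
      ring
    rw [h5, hVapp, hVapp]
    linarith
  have hzV : ((z, V) : X × StrongDual ℝ X) ∈ gra A :=
    mem_gra_of_rel A hA (z, V) hVrel
  -- final step : (z, zs) is monotonically related to the whole graph
  have hfinal : ∀ p ∈ gra A, 0 ≤ (zs - p.2) (z - p.1) := by
    intro p hp
    set a : ℝ := (zs - V) (p.1 - z) with ha
    set b : ℝ := (p.2 - V) (p.1 - z) with hb
    have hb0 : 0 ≤ b := hA.1 p hp (z, V) hzV
    have hE : ∀ t : ℝ, |t| * ‖p.1 - z‖ < ε → t * a ≤ t ^ 2 * b := by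
      intro t ht
      have hμS : ((1 - t) • ((z, V) : X × StrongDual ℝ X) + t • p) ∈ gra A := by
        rw [memS]
        exact S.add_mem (S.smul_mem _ ((memS _).mp hzV)) (S.smul_mem _ ((memS p).mp hp))
      have hμ1 : ((1 - t) • ((z, V) : X × StrongDual ℝ X) + t • p).1 - z = t • (p.1 - z) := by
        simp only [Prod.fst_add, Prod.smul_fst]
        rw [sub_smul, one_smul, smul_sub]
        abel
      have hball : ‖((1 - t) • ((z, V) : X × StrongDual ℝ X) + t • p).1 - z‖ < ε := by
        rw [hμ1, norm_smul, Real.norm_eq_abs]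
        exact ht
      have hH := Hloc _ hμS hball
      have hident : ((1 - t) • ((z, V) : X × StrongDual ℝ X) + t • p).2 z
          + zs ((1 - t) • ((z, V) : X × StrongDual ℝ X) + t • p).1
          - ((1 - t) • ((z, V) : X × StrongDual ℝ X) + t • p).2
            (((1 - t) • ((z, V) : X × StrongDual ℝ X) + t • p).1)
          - zs z = t * a - t ^ 2 * b := by
        rw [ha, hb]
        simp only [Prod.fst_add, Prod.smul_fst, Prod.snd_add, Prod.smul_snd,
          ContinuousLinearMap.add_apply, ContinuousLinearMap.coe_smul', Pi.smul_apply,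
          ContinuousLinearMap.sub_apply, map_add, map_smul, map_sub, smul_eq_mul]
        ring
      linarith
    have ht₀ : 0 < ε / (‖p.1 - z‖ + 1) := by positivity
    set t₀ : ℝ := ε / (‖p.1 - z‖ + 1) with ht₀def
    have hfeas : ∀ τ : ℝ, |τ| ≤ t₀ → |τ| * ‖p.1 - z‖ < ε := by
      intro τ hτ
      have hN : (0:ℝ) ≤ ‖p.1 - z‖ := norm_nonneg _
      have h1 : |τ| * ‖p.1 - z‖ ≤ t₀ * ‖p.1 - z‖ := mul_le_mul_of_nonneg_right hτ hN
      have h2 : t₀ * ‖p.1 - z‖ < ε := by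
        rw [ht₀def, div_mul_eq_mul_div, div_lt_iff₀ (by linarith : (0:ℝ) < ‖p.1 - z‖ + 1)]
        exact mul_lt_mul_of_pos_left (by linarith) hε
      linarith
    have habs : ∀ τ : ℝ, 0 < τ → τ ≤ t₀ → |a| ≤ τ * b := by
      intro τ h1 h2
      have hq1 := hE τ (hfeas τ (by rwa [abs_of_pos h1]))
      have hq2 := hE (-τ) (hfeas (-τ) (by rwa [abs_neg, abs_of_pos h1]))
      have hsq : (-τ : ℝ) ^ 2 = τ ^ 2 := by ring
      rw [hsq] at hq2
      rw [abs_le]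
      constructor
      · have hexp : τ * (a + τ * b) = τ * a + τ ^ 2 * b := by ring
        have hc2 : τ * 0 ≤ τ * (a + τ * b) := by
          rw [mul_zero, hexp]
          linarith
        have := le_of_mul_le_mul_left hc2 h1
        linarith
      · have hexp : τ * (τ * b - a) = τ ^ 2 * b - τ * a := by ring
        have hc2 : τ * 0 ≤ τ * (τ * b - a) := by
          rw [mul_zero, hexp]
          linarith
        have := le_of_mul_le_mul_left hc2 h1
        linarith
    have ha0 : a = 0 := by
      by_contra h
      have h' : 0 < |a| := abs_pos.mpr h
      have h2b : (0:ℝ) < 2 * (b + 1) := by linarith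
      set τ : ℝ := min t₀ (|a| / (2 * (b + 1))) with hτdef
      have hτpos : 0 < τ := lt_min ht₀ (div_pos h' h2b)
      have hub := habs τ hτpos (min_le_left _ _)
      have hτle : τ ≤ |a| / (2 * (b + 1)) := min_le_right _ _
      have h3 : τ * b ≤ |a| / (2 * (b + 1)) * b := mul_le_mul_of_nonneg_right hτle hb0
      have h4 : |a| ≤ |a| * b / (2 * (b + 1)) := by
        calc |a| ≤ τ * b := hub
        _ ≤ |a| / (2 * (b + 1)) * b := h3
        _ = |a| * b / (2 * (b + 1)) := by ring
      rw [le_div_iff₀ h2b] at h4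
      have := le_of_mul_le_mul_left h4 h'
      linarith
    have hexp : (zs - p.2) (z - p.1) = b - a := by
      rw [ha, hb]
      simp only [ContinuousLinearMap.sub_apply, map_sub]
      ring
    rw [hexp, ha0]
    linarith
  exact hzs (mem_gra_of_rel A hA (z, zs) hfinal)
end

section
/- Let X be a real Banach space, let A: X ⇉ X* be a maximally monotone linear relation, and let f: X → (−∞,+∞] be a proper lower semicontinuous convex function with (0,0) ∈ gra A ∩ gra ∂f. If (z, z*) ∈ X × X* satisfies F_{A+∂f}(z, z*) < ⟨z, z*⟩, then ⟨z, a*⟩ = 0 for every a* ∈ A0, i.e., z ∈ (A0)^⊥. -/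
open NormedSpace Set Pointwise

variable {X : Type*} [NormedAddCommGroup X] [NormedSpace ℝ X]

/-- If `A` is a maximally monotone linear relation, `f` is proper lsc convex with
`(0,0) ∈ gra A ∩ gra ∂f`, and `F_{A+∂f}(z,z*) < ⟨z,z*⟩`, then `z ∈ (A0)^⊥`. -/
theorem mem_perp_of_fitz_lt
    {X : Type*} [NormedAddCommGroup X] [NormedSpace ℝ X] [CompleteSpace X]
    (A : X → Set (StrongDual ℝ X)) (hA : IsMaxMonotoneOp A) (hAlin : IsLinearRelation A)
    (f : X → EReal) (hproper : EProper f) (hconv : EConvex f)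
    (hlsc : LowerSemicontinuous f)
    (h0A : (0 : StrongDual ℝ X) ∈ A 0) (h0f : (0 : StrongDual ℝ X) ∈ subdiff f 0)
    (z : X) (zs : StrongDual ℝ X)
    (hlt : fitz (opSum A (subdiff f)) (z, zs) < ((zs z : ℝ) : EReal)) :
    ∀ as ∈ A 0, as z = 0 := by

  intro as hasA
  obtain ⟨S, hS⟩ := hAlin
  -- for each t : ℝ, t • as ∈ A 0
  have hsmul : ∀ t : ℝ, t • as ∈ A 0 := by
    intro t
    have h1 : ((0 : X), as) ∈ S := by
      rw [← SetLike.mem_coe, hS]; exact hasA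
    have h2 : ((0 : X), t • as) ∈ S := by
      have := S.smul_mem t h1
      simpa using this
    rw [← SetLike.mem_coe, hS] at h2
    exact h2
  have key : ∀ t : ℝ, ((t * as z : ℝ) : EReal) ≤ fitz (opSum A (subdiff f)) (z, zs) := by
    intro t
    have hq : ((0 : X), t • as) ∈ gra (opSum A (subdiff f)) := by
      show t • as ∈ A 0 + subdiff f 0
      exact ⟨t • as, hsmul t, 0, h0f, by simp⟩
    have hle := le_iSup₂ (f := fun (q : X × StrongDual ℝ X) (_ : q ∈ gra (opSum A (subdiff f))) =>
      (((z, zs).2 q.1 + q.2 (z, zs).1 - q.2 q.1 : ℝ) : EReal)) ((0 : X), t • as) hq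
    simpa [fitz] using hle
  have hlt' : ∀ t : ℝ, t * as z < zs z := by
    intro t
    have := lt_of_le_of_lt (key t) hlt
    exact_mod_cast this
  by_contra h
  have := hlt' (zs z / as z)
  rw [div_mul_cancel₀ _ h] at this
  exact lt_irrefl _ this
end

section
/- Let X be a real Banach space, let A: X ⇉ X* be a maximally monotone linear relation, and let f: X → (−∞,+∞] be a proper lower semicontinuous convex function with 0 ∈ dom A ∩ int dom ∂f and (0,0) ∈ gra A ∩ gra ∂f. If (z, z*) ∈ X × X* satisfies F_{A+∂f}(z, z*) < ⟨z, z*⟩, then z lies in the norm closure of dom A but z ∉ dom A. -/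
open NormedSpace Set Pointwise

variable {X : Type*} [NormedAddCommGroup X] [NormedSpace ℝ X]

/-! ### Auxiliary lemmas -/

section Aux

variable {f : X → EReal}

/-- An extended real below a real coercion and not `⊥` is a real coercion. -/
lemma ereal_exists_real {x : EReal} {a : ℝ} (hx : x ≤ (a : EReal)) (hb : x ≠ ⊥) :
    ∃ r : ℝ, x = (r : EReal) ∧ r ≤ a := by
  have ht : x ≠ ⊤ := ne_top_of_le_ne_top (EReal.coe_ne_top a) hx
  refine ⟨x.toReal, (EReal.coe_toReal ht hb).symm, ?_⟩
  rw [← EReal.coe_le_coe_iff, EReal.coe_toReal ht hb]; exact hx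

lemma ereal_le_coe_of_forall_eps {x : EReal} {a : ℝ}
    (h : ∀ ε : ℝ, 0 < ε → x ≤ ((a + ε : ℝ) : EReal)) : x ≤ (a : EReal) := by
  by_cases hb : x = ⊥
  · simp [hb]
  · obtain ⟨r, hr, hra⟩ := ereal_exists_real (h 1 one_pos) hb
    rw [hr, EReal.coe_le_coe_iff]
    refine le_of_forall_pos_le_add fun ε hε => ?_
    have := h ε hε
    rw [hr, EReal.coe_le_coe_iff] at this
    linarith

lemma ereal_coe_le_of_forall_eps {x : EReal} {a : ℝ}
    (h : ∀ ε : ℝ, 0 < ε → ((a - ε : ℝ) : EReal) ≤ x) : (a : EReal) ≤ x := by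
  by_cases ht : x = ⊤
  · simp [ht]
  · have hb : x ≠ ⊥ := by
      intro hbb
      have := h 1 one_pos
      rw [hbb] at this
      exact (EReal.coe_ne_bot _) (le_bot_iff.mp this)
    rw [← EReal.coe_toReal ht hb, EReal.coe_le_coe_iff]
    refine le_of_forall_pos_le_add fun ε hε => ?_
    have := h ε hε
    rw [← EReal.coe_toReal ht hb, EReal.coe_le_coe_iff] at this
    linarith

/-- Real form of convexity. -/
lemma econvex_real (hconv : EConvex f) (hbot : ∀ x, f x ≠ ⊥) {x y : X} {a b t : ℝ}
    (ht0 : 0 ≤ t) (ht1 : t ≤ 1) (hx : f x ≤ (a : EReal)) (hy : f y ≤ (b : EReal)) :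
    f (t • x + (1 - t) • y) ≤ ((t * a + (1 - t) * b : ℝ) : EReal) := by
  obtain ⟨xr, hxr, hxa⟩ := ereal_exists_real hx (hbot x)
  obtain ⟨yr, hyr, hyb⟩ := ereal_exists_real hy (hbot y)
  have h := hconv x y t ht0 ht1
  rw [hxr, hyr] at h
  calc f (t • x + (1 - t) • y) ≤ (t : EReal) * (xr : EReal) + ((1 - t : ℝ) : EReal) * (yr : EReal) := h
    _ = ((t * xr + (1 - t) * yr : ℝ) : EReal) := by
        rw [← EReal.coe_mul, ← EReal.coe_mul, ← EReal.coe_add]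
    _ ≤ ((t * a + (1 - t) * b : ℝ) : EReal) := by
        rw [EReal.coe_le_coe_iff]
        have h1 : t * xr ≤ t * a := mul_le_mul_of_nonneg_left hxa ht0
        have h2 : (1 - t) * yr ≤ (1 - t) * b := mul_le_mul_of_nonneg_left hyb (by linarith)
        linarith

/-- Real form of the subgradient inequality. -/
lemma subdiff_real {b : StrongDual ℝ X} {x y : X} {vx vy : ℝ} (hb : b ∈ subdiff f x)
    (hx : f x = (vx : EReal)) (hy : f y ≤ (vy : EReal)) :
    b (y - x) + vx ≤ vy := by
  have h := hb y
  rw [hx] at h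
  have h2 : ((b (y - x) + vx : ℝ) : EReal) ≤ (vy : EReal) := by
    rw [EReal.coe_add]; exact le_trans h hy
  exact EReal.coe_le_coe_iff.mp h2

/-- The domain of the subdifferential is contained in the effective domain. -/
lemma domOp_subdiff_subset_fdom (hproper : EProper f) : domOp (subdiff f) ⊆ fdom f := by
  rintro x ⟨b, hb⟩
  obtain ⟨y, hy⟩ := hproper.1
  intro hx
  have h := hb y
  rw [hx] at h
  have h2 : ((b (y - x) : ℝ) : EReal) + (⊤ : EReal) = ⊤ := rfl
  rw [h2] at h
  exact hy (top_le_iff.mp h)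

/-- The effective domain is convex. -/
lemma fdom_convex (hconv : EConvex f) (hbot : ∀ x, f x ≠ ⊥) : Convex ℝ (fdom f) := by
  intro x hx y hy a b ha hb hab
  obtain ⟨xr, hxr⟩ : ∃ r : ℝ, f x = (r : EReal) :=
    ⟨_, ((EReal.coe_toReal hx (hbot x)).symm)⟩
  obtain ⟨yr, hyr⟩ : ∃ r : ℝ, f y = (r : EReal) :=
    ⟨_, ((EReal.coe_toReal hy (hbot y)).symm)⟩
  have h := econvex_real hconv hbot (x := x) (y := y) (a := xr) (b := yr) (t := a)
    ha (by linarith) (le_of_eq hxr) (le_of_eq hyr)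
  have hb1 : b = 1 - a := by linarith
  rw [hb1]
  intro htop
  rw [htop] at h
  exact (EReal.coe_ne_top _) (top_le_iff.mp h)

end Aux

section Sep

variable {X : Type*} [NormedAddCommGroup X] [NormedSpace ℝ X]

/-- Separation lemma: an "epigraph-like" convex set containing a vertical box around `x₀`
and avoiding the point `(x₀, v)` in its interior admits an affine minorant based at `(x₀,v)`. -/
lemma sep_lemma {E : Set (X × ℝ)} (hE : Convex ℝ E) {x₀ : X} {v M ρ : ℝ} (hρ : 0 < ρ)
    (hbox : ∀ y ∈ Metric.ball x₀ ρ, ∀ c : ℝ, M < c → (y, c) ∈ E)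
    (hP : (x₀, v) ∉ interior E) :
    ∃ u : StrongDual ℝ X, ∀ q ∈ E, u (q.1 - x₀) ≤ q.2 - v := by
  -- the box is inside the interior
  have hboxint : ∀ y ∈ Metric.ball x₀ ρ, ∀ c : ℝ, M < c → (y, c) ∈ interior E := by
    intro y hy c hc
    have hsub : (Metric.ball x₀ ρ) ×ˢ (Ioi M) ⊆ E := by
      rintro ⟨y', c'⟩ ⟨hy', hc'⟩
      exact hbox y' hy' c' hc'
    exact interior_maximal hsub ((Metric.isOpen_ball).prod isOpen_Ioi) ⟨hy, hc⟩
  have hOconv : Convex ℝ (interior E) := hE.interior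
  obtain ⟨F, hF⟩ := geometric_hahn_banach_open_point hOconv isOpen_interior hP
  -- decompose F
  set w : StrongDual ℝ X := F.comp (ContinuousLinearMap.inl ℝ X ℝ) with hw
  set α : ℝ := F (0, 1) with hα
  have hdec : ∀ (y : X) (r : ℝ), F (y, r) = w y + r * α := by
    intro y r
    have h1 : ((y, r) : X × ℝ) = ((y, (0:ℝ)) : X × ℝ) + r • (((0:X), (1:ℝ)) : X × ℝ) := by simp
    rw [h1, map_add, map_smul]
    rfl
  -- α < 0
  have hαneg : α < 0 := by
    have h1 : ((x₀, max M v + 1) : X × ℝ) ∈ interior E :=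
      hboxint x₀ (Metric.mem_ball_self hρ) _ (by have := le_max_left M v; linarith)
    have h2 := hF _ h1
    rw [hdec, hdec] at h2
    have h3 : max M v + 1 > v := by have := le_max_right M v; linarith
    nlinarith
  -- every point of E is in the closure of the interior
  have hclos : ∀ q ∈ E, F q ≤ F (x₀, v) := by
    intro q hq
    set q₀ : X × ℝ := (x₀, max M v + 1) with hq₀
    have hq₀int : q₀ ∈ interior E :=
      hboxint x₀ (Metric.mem_ball_self hρ) _ (by have := le_max_left M v; linarith)
    have hseq : ∀ n : ℕ, ((n+1:ℝ)⁻¹ • q₀ + (1 - (n+1:ℝ)⁻¹) • q) ∈ interior E := by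
      intro n
      have hpos : (0:ℝ) < (n+1:ℝ)⁻¹ := by positivity
      have hle : (n+1:ℝ)⁻¹ ≤ 1 := by
        rw [inv_le_one_iff₀]; right; exact_mod_cast Nat.le_add_left 1 n
      exact hE.combo_interior_closure_mem_interior hq₀int (subset_closure hq) hpos
        (by linarith) (by ring)
    have htend : Filter.Tendsto (fun n : ℕ => ((n+1:ℝ)⁻¹ • q₀ + (1 - (n+1:ℝ)⁻¹) • q))
        Filter.atTop (nhds q) := by
      have h0 : Filter.Tendsto (fun n : ℕ => ((n:ℝ)+1)⁻¹) Filter.atTop (nhds 0) :=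
        tendsto_one_div_add_atTop_nhds_zero_nat.congr (by intro n; rw [one_div])
      have : Filter.Tendsto (fun n : ℕ => ((n+1:ℝ)⁻¹ • q₀ + (1 - (n+1:ℝ)⁻¹) • q))
          Filter.atTop (nhds ((0:ℝ) • q₀ + (1 - 0:ℝ) • q)) := by
        exact ((h0.smul_const q₀).add (((tendsto_const_nhds).sub h0).smul_const q))
      simpa using this
    have hchain : ∀ n : ℕ, F ((n+1:ℝ)⁻¹ • q₀ + (1 - (n+1:ℝ)⁻¹) • q) ≤ F (x₀, v) :=
      fun n => le_of_lt (hF _ (hseq n))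
    have := le_of_tendsto ((F.continuous.tendsto q).comp htend)
      (Filter.Eventually.of_forall hchain)
    exact this
  -- conclude
  refine ⟨(-α)⁻¹ • w, ?_⟩
  rintro ⟨y, c⟩ hq
  have h1 := hclos _ hq
  rw [hdec, hdec] at h1
  have hαpos : 0 < -α := by linarith
  have h2 : w y - w x₀ ≤ (-α) * (c - v) := by nlinarith
  have h3 : ((-α)⁻¹ • w) (y - x₀) = (-α)⁻¹ * (w y - w x₀) := by
    rw [map_sub]
    show (-α)⁻¹ * w y - (-α)⁻¹ * w x₀ = _
    ring
  rw [h3]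
  rw [inv_mul_le_iff₀ hαpos]
  linarith [h2]

end Sep

section Baire

variable {X : Type*} [NormedAddCommGroup X] [NormedSpace ℝ X] {f : X → EReal}

/-- A lsc proper convex function is locally bounded above at interior points of its domain. -/
lemma baire_bound [CompleteSpace X] (hproper : EProper f) (hconv : EConvex f)
    (hlsc : LowerSemicontinuous f) {x : X} (hx : x ∈ interior (fdom f)) :
    ∃ ρ : ℝ, 0 < ρ ∧ ∃ M : ℝ, ∀ y ∈ Metric.ball x ρ, f y ≤ (M : EReal) := by
  classical
  -- first, boundedness on *some* ball inside the domain
  obtain ⟨ρ₁, hρ₁, hball₁⟩ : ∃ ρ₁ : ℝ, 0 < ρ₁ ∧ Metric.ball x ρ₁ ⊆ fdom f := by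
    obtain ⟨ρ₁, hρ₁, h⟩ := Metric.mem_nhds_iff.mp (mem_interior_iff_mem_nhds.mp hx)
    exact ⟨ρ₁, hρ₁, h⟩
  have hstage1 : ∃ (w : X) (ρ₂ : ℝ) (n : ℕ), 0 < ρ₂ ∧
      (∀ y ∈ Metric.ball w ρ₂, f y ≤ ((n : ℝ) : EReal)) ∧ w ∈ Metric.ball x ρ₁ := by
    set C : ℕ → Set X := fun n => (f ⁻¹' Iic ((n : ℝ) : EReal)) ∪ (Metric.ball x ρ₁)ᶜ with hC
    have hCclosed : ∀ n, IsClosed (C n) :=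
      fun n => (hlsc.isClosed_preimage _).union (Metric.isOpen_ball).isClosed_compl
    have hCcover : ⋃ n, C n = univ := by
      ext y
      simp only [mem_iUnion, mem_univ, iff_true]
      by_cases hy : y ∈ Metric.ball x ρ₁
      · have hyd : f y ≠ ⊤ := hball₁ hy
        have hyb : f y ≠ ⊥ := hproper.2 y
        refine ⟨⌈(f y).toReal⌉₊, Or.inl ?_⟩
        simp only [mem_preimage, mem_Iic]
        rw [← EReal.coe_toReal hyd hyb, EReal.coe_le_coe_iff]
        exact Nat.le_ceil _
      · exact ⟨0, Or.inr hy⟩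
    have hdense := dense_iUnion_interior_of_closed hCclosed hCcover
    obtain ⟨w, hw⟩ := (hdense.inter_open_nonempty (Metric.ball x ρ₁) Metric.isOpen_ball
      ⟨x, Metric.mem_ball_self hρ₁⟩)
    obtain ⟨hw1, hw2⟩ := hw
    obtain ⟨n, hn⟩ := mem_iUnion.mp hw2
    obtain ⟨ρ₂, hρ₂, hball₂⟩ := Metric.mem_nhds_iff.mp
      ((isOpen_interior.inter Metric.isOpen_ball).mem_nhds ⟨hn, hw1⟩)
    refine ⟨w, ρ₂, n, hρ₂, ?_, hw1⟩
    intro y hy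
    have hy2 := hball₂ hy
    have : y ∈ C n := interior_subset hy2.1
    rcases this with h | h
    · exact h
    · exact absurd hy2.2 h
  obtain ⟨w, ρ₂, n, hρ₂, hwbound, hwball⟩ := hstage1
  -- spread to x
  by_cases hxw : x = w
  · exact ⟨ρ₂, hρ₂, n, by rw [hxw]; exact hwbound⟩
  set τ : ℝ := ρ₁ / (2 * (‖x - w‖ + 1)) with hτ
  have hτpos : 0 < τ := by positivity
  have hy₀mem : x + τ • (x - w) ∈ fdom f := by
    apply hball₁
    rw [Metric.mem_ball, dist_eq_norm]
    have h1 : ‖x + τ • (x - w) - x‖ = τ * ‖x - w‖ := by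
      rw [add_sub_cancel_left, norm_smul, Real.norm_eq_abs, abs_of_pos hτpos]
    rw [h1, hτ]
    rw [div_mul_eq_mul_div, div_lt_iff₀ (by positivity)]
    nlinarith [norm_nonneg (x - w), hρ₁]
  set y₀ : X := x + τ • (x - w) with hy₀
  set V : ℝ := (f y₀).toReal with hV
  have hfy₀ : f y₀ = (V : EReal) := (EReal.coe_toReal hy₀mem (hproper.2 y₀)).symm
  set μ : ℝ := 1 / (1 + τ) with hμ
  have hμpos : 0 < μ := by positivity
  have hμlt : μ < 1 := by
    rw [hμ, div_lt_one (by positivity)]; linarith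
  refine ⟨τ * ρ₂ / (1 + τ), by positivity, max V n, ?_⟩
  intro y hy
  set u : X := w + ((1 + τ) / τ) • (y - x) with hu
  have humem : u ∈ Metric.ball w ρ₂ := by
    rw [Metric.mem_ball, dist_eq_norm, hu, add_sub_cancel_left, norm_smul,
      Real.norm_eq_abs, abs_of_pos (by positivity)]
    rw [Metric.mem_ball, dist_eq_norm] at hy
    rw [div_mul_eq_mul_div, div_lt_iff₀ hτpos]
    have h2 : ‖y - x‖ < τ * ρ₂ / (1 + τ) := hy
    calc (1 + τ) * ‖y - x‖ < (1 + τ) * (τ * ρ₂ / (1 + τ)) := by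
          apply mul_lt_mul_of_pos_left h2 (by positivity)
      _ = ρ₂ * τ := by field_simp
  have hτne : τ ≠ 0 := ne_of_gt hτpos
  have hτ1ne : 1 + τ ≠ 0 := by positivity
  have hcombo : y = μ • y₀ + (1 - μ) • u := by
    rw [hy₀, hu, hμ]
    match_scalars <;> field_simp <;> ring
  have := econvex_real hconv hproper.2 (x := y₀) (y := u) (a := V) (b := (n : ℝ))
    (t := μ) (le_of_lt hμpos) (le_of_lt hμlt) (le_of_eq hfy₀) (hwbound u humem)
  rw [← hcombo] at this
  refine this.trans ?_
  rw [EReal.coe_le_coe_iff]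
  have h1 : μ * V ≤ μ * max V n := mul_le_mul_of_nonneg_left (le_max_left _ _) (le_of_lt hμpos)
  have h2 : (1 - μ) * (n : ℝ) ≤ (1 - μ) * max V n :=
    mul_le_mul_of_nonneg_left (le_max_right _ _) (by linarith)
  nlinarith

/-- Nonemptiness of the subdifferential at interior points of the domain. -/
lemma subdiff_nonempty [CompleteSpace X] (hproper : EProper f) (hconv : EConvex f)
    (hlsc : LowerSemicontinuous f) {x : X} (hx : x ∈ interior (fdom f)) :
    (subdiff f x).Nonempty := by
  obtain ⟨ρ, hρ, M, hM⟩ := baire_bound hproper hconv hlsc hx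
  set v : ℝ := (f x).toReal with hv
  have hfx : f x = (v : EReal) := (EReal.coe_toReal (interior_subset hx) (hproper.2 x)).symm
  set E : Set (X × ℝ) := {q | f q.1 ≤ ((q.2 : ℝ) : EReal)} with hE
  have hEconv : Convex ℝ E := by
    rintro ⟨y₁, c₁⟩ h₁ ⟨y₂, c₂⟩ h₂ a b ha hb hab
    have hb1 : b = 1 - a := by linarith
    subst hb1
    have := econvex_real hconv hproper.2 (x := y₁) (y := y₂) (a := c₁) (b := c₂) (t := a)
      ha (by linarith) h₁ h₂
    exact this
  have hbox : ∀ y ∈ Metric.ball x ρ, ∀ c : ℝ, M < c → (y, c) ∈ E := by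
    intro y hy c hc
    exact (hM y hy).trans (by rw [EReal.coe_le_coe_iff]; linarith)
  have hP : ((x, v) : X × ℝ) ∉ interior E := by
    intro hmem
    obtain ⟨ε, hε, hsub⟩ := Metric.mem_nhds_iff.mp (mem_interior_iff_mem_nhds.mp hmem)
    have hpt : ((x, v - ε/2) : X × ℝ) ∈ Metric.ball ((x, v) : X × ℝ) ε := by
      rw [Metric.mem_ball, dist_eq_norm]
      have : ((x, v - ε/2) : X × ℝ) - (x, v) = (0, -(ε/2)) := by
        ext <;> simp
      rw [this]
      rw [Prod.norm_def]
      simp [abs_of_pos hε]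
      linarith
    have := hsub hpt
    rw [hE] at this
    simp only [mem_setOf_eq] at this
    rw [hfx, EReal.coe_le_coe_iff] at this
    linarith
  obtain ⟨u, hu⟩ := sep_lemma hEconv hρ hbox hP
  refine ⟨u, fun y => ?_⟩
  by_cases hytop : f y = ⊤
  · rw [hytop]; exact le_top
  · set cy : ℝ := (f y).toReal with hcy
    have hfy : f y = (cy : EReal) := (EReal.coe_toReal hytop (hproper.2 y)).symm
    have hyE : ((y, cy) : X × ℝ) ∈ E := by
      rw [hE]; simp only [mem_setOf_eq]; rw [hfy]
    have := hu _ hyE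
    simp only at this
    rw [hfx, hfy, ← EReal.coe_add, EReal.coe_le_coe_iff]
    linarith

end Baire

set_option maxHeartbeats 2000000

/-- If `A` is a maximally monotone linear relation, `f` is proper lsc convex with
`0 ∈ dom A ∩ int dom ∂f` and `(0,0) ∈ gra A ∩ gra ∂f`, and `F_{A+∂f}(z,z*) < ⟨z,z*⟩`,
then `z ∈ closure (dom A) \ dom A`. -/
theorem mem_closure_dom_diff_dom_of_fitz_lt
    {X : Type*} [NormedAddCommGroup X] [NormedSpace ℝ X] [CompleteSpace X]
    (A : X → Set (StrongDual ℝ X)) (hA : IsMaxMonotoneOp A) (hAlin : IsLinearRelation A)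
    (f : X → EReal) (hproper : EProper f) (hconv : EConvex f)
    (hlsc : LowerSemicontinuous f)
    (h0 : (0 : X) ∈ domOp A ∩ interior (domOp (subdiff f)))
    (h0A : (0 : StrongDual ℝ X) ∈ A 0) (h0f : (0 : StrongDual ℝ X) ∈ subdiff f 0)
    (z : X) (zs : StrongDual ℝ X)
    (hlt : fitz (opSum A (subdiff f)) (z, zs) < ((zs z : ℝ) : EReal)) :
    z ∈ closure (domOp A) ∧ z ∉ domOp A := by
  classical
  obtain ⟨S, hS⟩ := hAlin
  set B : X → Set (StrongDual ℝ X) := opSum A (subdiff f) with hB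
  have h00A : ((0 : X), (0 : StrongDual ℝ X)) ∈ gra A := h0A
  -- (0,0) in gra B
  have h00B : ((0 : X), (0 : StrongDual ℝ X)) ∈ gra B := by
    show (0 : StrongDual ℝ X) ∈ A 0 + subdiff f 0
    have := Set.add_mem_add h0A h0f
    simpa using this
  -- the uniform bound r
  have hFle : ∀ q ∈ gra B, ((zs q.1 + q.2 z - q.2 q.1 : ℝ) : EReal) ≤ fitz B (z, zs) := by
    intro q hq
    exact le_biSup (f := fun q : X × StrongDual ℝ X => ((zs q.1 + q.2 z - q.2 q.1 : ℝ) : EReal)) hq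
  have hF0 : (0 : EReal) ≤ fitz B (z, zs) := by
    have := hFle _ h00B
    simpa using this
  have hFtop : fitz B (z, zs) ≠ ⊤ := ne_top_of_lt hlt
  have hFbot : fitz B (z, zs) ≠ ⊥ := fun h => by simp [h] at hF0
  set r : ℝ := (fitz B (z, zs)).toReal with hr
  have hFr : fitz B (z, zs) = (r : EReal) := (EReal.coe_toReal hFtop hFbot).symm
  have hgap : ∀ q ∈ gra B, zs q.1 + q.2 z - q.2 q.1 ≤ r := by
    intro q hq
    have := hFle q hq
    rw [hFr, EReal.coe_le_coe_iff] at this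
    exact this
  have hr0 : 0 ≤ r := by
    have := hF0; rw [hFr] at this; exact_mod_cast this
  have hrz : r < zs z := by
    rw [hFr, EReal.coe_lt_coe_iff] at hlt
    exact hlt
  -- membership in A of scaled graph elements
  have hmemA : ∀ (p : X × StrongDual ℝ X), p ∈ gra A → ∀ t : ℝ, (t • p.1, t • p.2) ∈ gra A := by
    intro p hp t
    rw [← hS] at hp ⊢
    exact S.smul_mem t hp
  -- monotonicity of single graph elements of A
  have hpos : ∀ q ∈ gra A, 0 ≤ q.2 q.1 := by
    intro q hq
    have := hA.1 q hq ((0 : X), (0 : StrongDual ℝ X)) h00A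
    simpa using this
  -- Part 1 : z in the closure of dom A
  have part1 : z ∈ closure (domOp A) := by
    by_contra hzc
    -- separate
    have hDconv : Convex ℝ (domOp A) := by
      rintro x ⟨xd, hxd⟩ y ⟨yd, hyd⟩ a b ha hb hab
      have hxg : (x, xd) ∈ gra A := hxd
      have hyg : (y, yd) ∈ gra A := hyd
      rw [← hS] at hxg hyg
      have hmem : a • (x, xd) + b • (y, yd) ∈ (S : Set (X × StrongDual ℝ X)) :=
        S.add_mem (S.smul_mem a hxg) (S.smul_mem b hyg)
      rw [hS] at hmem
      exact ⟨_, hmem⟩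
    obtain ⟨g', u, hgu, huz⟩ :=
      geometric_hahn_banach_closed_point hDconv.closure isClosed_closure hzc
    have h0D : (0 : X) ∈ domOp A := h0.1
    have hu0 : 0 < u := by
      have := hgu 0 (subset_closure h0D)
      simpa using this
    have hgD : ∀ a ∈ domOp A, g' a = 0 := by
      intro a ha
      by_contra hga
      -- scale to exceed u
      obtain ⟨ad, had⟩ := ha
      have haA : (a, ad) ∈ gra A := had
      set s : ℝ := (u + 1) / g' a with hs
      have hsA := hmemA _ haA s
      have : s • a ∈ domOp A := ⟨_, hsA⟩
      have h1 := hgu _ (subset_closure this)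
      rw [map_smul] at h1
      have h2 : s • g' a = u + 1 := by
        rw [smul_eq_mul, hs, div_mul_cancel₀ _ hga]
      rw [h2] at h1
      linarith
    have hgz0 : 0 < g' z := lt_trans hu0 huz
    set g : StrongDual ℝ X := (g' z)⁻¹ • g' with hg
    have hgz : g z = 1 := by
      show (g' z)⁻¹ * g' z = 1
      field_simp
    have hgD0 : ∀ a ∈ domOp A, g a = 0 := by
      intro a ha
      show (g' z)⁻¹ * g' a = 0
      rw [hgD a ha, mul_zero]
    -- maximality extension : s • g ∈ A 0 for all s
    have hext : ∀ s : ℝ, s • g ∈ A 0 := by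
      intro s
      set B' : X → Set (StrongDual ℝ X) := fun x => A x ∪ {v | x = 0 ∧ v = s • g} with hB'
      have hmono : IsMonotoneOp B' := by
        rintro p hp q hq
        have hp' : p.2 ∈ A p.1 ∨ (p.1 = 0 ∧ p.2 = s • g) := hp
        have hq' : q.2 ∈ A q.1 ∨ (q.1 = 0 ∧ q.2 = s • g) := hq
        rcases hp' with hp1 | ⟨hp1, hp2⟩ <;> rcases hq' with hq1 | ⟨hq1, hq2⟩
        · exact hA.1 p hp1 q hq1
        · have hqD : p.1 ∈ domOp A := ⟨_, hp1⟩
          rw [hq1, hq2]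
          have : (p.2 - s • g) (p.1 - 0) = p.2 p.1 - s * g p.1 := by
            rw [sub_zero, ContinuousLinearMap.sub_apply]
            congr 1
          rw [this, hgD0 _ hqD]
          have := hpos p hp1
          simpa using this
        · have hpD : q.1 ∈ domOp A := ⟨_, hq1⟩
          rw [hp1, hp2]
          have : (s • g - q.2) ((0 : X) - q.1) = (q.2 - s • g) (q.1 - (0:X)) := by
            rw [zero_sub, sub_zero, map_neg]
            simp
          rw [this]
          have h1 : (q.2 - s • g) (q.1 - 0) = q.2 q.1 - s * g q.1 := by
            rw [sub_zero, ContinuousLinearMap.sub_apply]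
            congr 1
          rw [h1, hgD0 _ hpD]
          have := hpos q hq1
          simpa using this
        · rw [hp1, hp2, hq1, hq2]
          simp
      have hsub : gra A ⊆ gra B' := by
        intro q hq
        exact Or.inl hq
      have heq := hA.2 B' hmono hsub
      have hmem : ((0 : X), s • g) ∈ gra B' := Or.inr ⟨rfl, rfl⟩
      rw [heq] at hmem
      exact hmem
    -- contradiction with the gap
    have hq : ((0 : X), (r + 1) • g) ∈ gra B := by
      show (r + 1) • g ∈ A 0 + subdiff f 0
      have : (r + 1) • g = (r + 1) • g + 0 := by rw [add_zero]
      rw [this]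
      exact Set.add_mem_add (hext (r + 1)) h0f
    have hfin := hgap _ hq
    have he1 : ((r + 1) • g) z = (r + 1) * g z := rfl
    have he2 : ((r + 1) • g) (0 : X) = (r + 1) * g 0 := rfl
    simp only [map_zero, he1, he2, hgz] at hfin
    simp at hfin
    linarith
  refine ⟨part1, ?_⟩
  -- Part 2 : z not in dom A
  intro hz
  obtain ⟨as, has⟩ := hz
  have hzA : (z, as) ∈ gra A := has
  have hz0 : z ≠ 0 := by
    rintro rfl
    rw [map_zero] at hrz
    linarith
  have hnz : 0 < ‖z‖ := norm_pos_iff.mpr hz0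
  have hintf : (0 : X) ∈ interior (fdom f) :=
    interior_mono (domOp_subdiff_subset_fdom hproper) h0.2
  have hfdomconv : Convex ℝ (fdom f) := fdom_convex hconv hproper.2
  have hf0top : f 0 ≠ ⊤ := interior_subset hintf
  set m : ℝ := (f 0).toReal with hm
  have hfm : f 0 = (m : EReal) := (EReal.coe_toReal hf0top (hproper.2 0)).symm
  have hmin : ∀ y, (m : EReal) ≤ f y := by
    intro y
    have h := h0f y
    rw [hfm] at h
    simpa using h
  -- the intersection of the segment with the domain
  set J : Set ℝ := {t : ℝ | t ∈ Icc (0:ℝ) 1 ∧ f (t • z) ≠ ⊤} with hJ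
  have hJ0 : (0:ℝ) ∈ J := ⟨⟨le_refl 0, zero_le_one⟩, by simpa using hf0top⟩
  have hJbdd : BddAbove J := ⟨1, fun t ht => ht.1.2⟩
  set t₀ : ℝ := sSup J with ht₀def
  have ht₀le1 : t₀ ≤ 1 := csSup_le ⟨0, hJ0⟩ (fun t ht => ht.1.2)
  obtain ⟨δ, hδ, hδball⟩ : ∃ δ : ℝ, 0 < δ ∧ Metric.ball (0:X) δ ⊆ domOp (subdiff f) := by
    obtain ⟨δ, hδ, h⟩ := Metric.mem_nhds_iff.mp (mem_interior_iff_mem_nhds.mp h0.2)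
    exact ⟨δ, hδ, h⟩
  set t₁ : ℝ := min 1 (δ / (2 * ‖z‖)) with ht₁def
  have ht₁pos : 0 < t₁ := lt_min one_pos (by positivity)
  have ht₁J : t₁ ∈ J := by
    refine ⟨⟨le_of_lt ht₁pos, min_le_left _ _⟩, ?_⟩
    have hmem : t₁ • z ∈ Metric.ball (0:X) δ := by
      rw [Metric.mem_ball, dist_zero_right, norm_smul, Real.norm_eq_abs, abs_of_pos ht₁pos]
      have h1 : t₁ ≤ δ / (2 * ‖z‖) := min_le_right _ _
      calc t₁ * ‖z‖ ≤ (δ / (2 * ‖z‖)) * ‖z‖ := mul_le_mul_of_nonneg_right h1 (norm_nonneg z)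
        _ = δ / 2 := by field_simp
        _ < δ := by linarith
    exact domOp_subdiff_subset_fdom hproper (hδball hmem)
  have ht₀pos : 0 < t₀ := lt_of_lt_of_le ht₁pos (le_csSup hJbdd ht₁J)
  -- accessibility of the segment
  have hACC : ∀ t : ℝ, 0 ≤ t → t < t₀ → t • z ∈ interior (fdom f) := by
    intro t ht0 htlt
    obtain ⟨t'', ht''J, htt''⟩ := exists_lt_of_lt_csSup ⟨0, hJ0⟩ htlt
    have ht''pos : 0 < t'' := lt_of_le_of_lt ht0 htt''
    have hmemdom : t'' • z ∈ fdom f := ht''J.2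
    have hcombo : t • z = (1 - t / t'') • (0 : X) + (t / t'') • (t'' • z) := by
      rw [smul_zero, zero_add, smul_smul, div_mul_cancel₀ _ (ne_of_gt ht''pos)]
    rw [hcombo]
    exact hfdomconv.combo_interior_closure_mem_interior hintf (subset_closure hmemdom)
      (by rw [sub_pos, div_lt_one ht''pos]; exact htt'') (by positivity) (by ring)
  -- gap applied to segment points
  have hgap2 : ∀ t : ℝ, 0 ≤ t → t ≤ 1 → ∀ b ∈ subdiff f (t • z),
      t * zs z + (1 - t) * (t * as z + b z) ≤ r := by
    intro t ht0 ht1 b hb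
    have hmem : ((t • z, t • as + b) : X × StrongDual ℝ X) ∈ gra B := by
      have h1 : (t • z, t • as) ∈ gra A := hmemA _ hzA t
      show t • as + b ∈ A (t • z) + subdiff f (t • z)
      exact Set.add_mem_add h1 hb
    have h := hgap _ hmem
    simp only [map_smul, smul_eq_mul, ContinuousLinearMap.add_apply,
      ContinuousLinearMap.smul_apply] at h
    nlinarith [h]
  set K : ℝ := r + |as z| with hKdef
  have hK0 : 0 ≤ K := add_nonneg hr0 (abs_nonneg _)
  have hslope : ∀ t : ℝ, 0 < t → t < 1 → ∀ b ∈ subdiff f (t • z), b z ≤ K := by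
    intro t ht0 ht1 b hb
    have h := hgap2 t (le_of_lt ht0) (le_of_lt ht1) b hb
    have h1 : t * r ≤ t * zs z := mul_le_mul_of_nonneg_left (le_of_lt hrz) (le_of_lt ht0)
    have h2 : -(t * as z) ≤ |as z| := by
      calc -(t * as z) ≤ |t * as z| := neg_le_abs _
        _ = t * |as z| := by rw [abs_mul, abs_of_pos ht0]
        _ ≤ 1 * |as z| := mul_le_mul_of_nonneg_right (le_of_lt ht1) (abs_nonneg _)
        _ = |as z| := one_mul _
    nlinarith [h, h1, h2, abs_nonneg (as z)]
  have hreal : ∀ t : ℝ, 0 ≤ t → t < t₀ → f (t • z) = (((f (t • z)).toReal : ℝ) : EReal) :=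
    fun t h1 h2 => (EReal.coe_toReal (interior_subset (hACC t h1 h2)) (hproper.2 _)).symm
  have hupper : ∀ t : ℝ, 0 < t → t < t₀ → f (t • z) ≤ ((m + K * t : ℝ) : EReal) := by
    intro t ht0 htlt
    have ht1 : t < 1 := lt_of_lt_of_le htlt ht₀le1
    obtain ⟨b, hb⟩ := subdiff_nonempty hproper hconv hlsc (hACC t (le_of_lt ht0) htlt)
    have hvt := hreal t (le_of_lt ht0) htlt
    have hsub := subdiff_real hb hvt (le_of_eq hfm) (y := (0:X))
    have hbz := hslope t ht0 ht1 b hb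
    have happ : b ((0:X) - t • z) = -(t * b z) := by
      rw [zero_sub, map_neg, map_smul, smul_eq_mul]
    rw [happ] at hsub
    rw [hvt, EReal.coe_le_coe_iff]
    nlinarith [hsub, hbz]
  rcases eq_or_lt_of_le ht₀le1 with ht₀1 | ht₀1
  · -- case t₀ = 1
    set dn : ℝ := zs z + |as z| with hdn
    have hdnpos : 0 < dn := by
      have := abs_nonneg (as z); have := hr0; simp only [hdn]; linarith
    set ts : ℝ := (r + |as z|) / dn with hts
    have hts1 : ts < 1 := by
      rw [hts, div_lt_one hdnpos]; simp only [hdn]; linarith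
    have hts0 : 0 ≤ ts := div_nonneg (by linarith [abs_nonneg (as z)]) (le_of_lt hdnpos)
    set t : ℝ := (ts + 1) / 2 with htdef
    have htpos : 0 < t := by rw [htdef]; linarith
    have htlt1 : t < 1 := by rw [htdef]; linarith
    have htst : ts < t := by rw [htdef]; linarith
    have htltt₀ : t < t₀ := by rw [ht₀1]; exact htlt1
    obtain ⟨b, hb⟩ := subdiff_nonempty hproper hconv hlsc (hACC t (le_of_lt htpos) htltt₀)
    have hvt := hreal t (le_of_lt htpos) htltt₀
    have hbz0 : 0 ≤ b z := by
      have hsub := subdiff_real hb hvt (le_of_eq hfm) (y := (0:X))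
      have hmv : m ≤ (f (t • z)).toReal := by
        have := hmin (t • z); rw [hvt] at this; exact_mod_cast this
      have happ : b ((0:X) - t • z) = -(t * b z) := by
        rw [zero_sub, map_neg, map_smul, smul_eq_mul]
      rw [happ] at hsub
      nlinarith [hsub, hmv]
    have h := hgap2 t (le_of_lt htpos) (le_of_lt htlt1) b hb
    have h2 : -(t * as z) ≤ |as z| := by
      calc -(t * as z) ≤ |t * as z| := neg_le_abs _
        _ = t * |as z| := by rw [abs_mul, abs_of_pos htpos]
        _ ≤ 1 * |as z| := mul_le_mul_of_nonneg_right (le_of_lt htlt1) (abs_nonneg _)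
        _ = |as z| := one_mul _
    -- from h : t * zs z + (1-t)*(t * as z + b z) ≤ r  and b z ≥ 0 we get t ≤ ts
    have hfinal : t * dn ≤ r + |as z| := by nlinarith [h, hbz0, h2]
    have : t ≤ ts := by
      rw [hts, le_div_iff₀ hdnpos]; linarith
    linarith
  · -- case t₀ < 1
    set x₀ : X := t₀ • z with hx₀
    have hcontz : Continuous (fun t : ℝ => t • z) := continuous_id.smul continuous_const
    have hx₀notΩ : x₀ ∉ interior (fdom f) := by
      intro hmem
      have hopen : IsOpen ((fun t : ℝ => t • z) ⁻¹' interior (fdom f)) :=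
        isOpen_interior.preimage hcontz
      have ht₀mem : t₀ ∈ (fun t : ℝ => t • z) ⁻¹' interior (fdom f) := by
        show t₀ • z ∈ interior (fdom f)
        rw [← hx₀]; exact hmem
      obtain ⟨η, hη, hsub⟩ := Metric.isOpen_iff.mp hopen t₀ ht₀mem
      set t' : ℝ := min 1 (t₀ + η/2) with ht'def
      have ht'gt : t₀ < t' := lt_min ht₀1 (by linarith)
      have ht'le : t' ≤ t₀ + η/2 := min_le_right _ _
      have ht'J : t' ∈ J := by
        refine ⟨⟨by linarith, min_le_left _ _⟩, ?_⟩
        have : t' ∈ Metric.ball t₀ η := by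
          rw [Metric.mem_ball, Real.dist_eq, abs_of_pos (by linarith)]
          linarith
        have := hsub this
        exact interior_subset this
      have := le_csSup hJbdd ht'J
      linarith
    -- f x₀ is finite
    have hx₀top : f x₀ ≤ ((m + K * t₀ + 1 : ℝ) : EReal) := by
      by_contra hc
      push_neg at hc
      have hev := hlsc x₀ _ hc
      have htd : Filter.Tendsto (fun t : ℝ => t • z) (nhds t₀) (nhds x₀) := by
        rw [hx₀]; exact hcontz.continuousAt
      have hev2 := htd.eventually hev
      obtain ⟨η, hη, hsub⟩ := Metric.eventually_nhds_iff.mp hev2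
      set t : ℝ := t₀ - min η t₀ / 2 with htdef
      have hmin2 : 0 < min η t₀ := lt_min hη ht₀pos
      have ht0 : 0 < t := by
        have : min η t₀ ≤ t₀ := min_le_right _ _
        rw [htdef]; linarith
      have htlt : t < t₀ := by rw [htdef]; linarith
      have hdist : dist t t₀ < η := by
        rw [Real.dist_eq, htdef]
        have h1 : min η t₀ ≤ η := min_le_left _ _
        rw [abs_of_nonpos (by linarith)]
        linarith
      have h1 := hsub hdist
      have h2 := hupper t ht0 htlt
      have h3 : ((m + K * t : ℝ) : EReal) < ((m + K * t₀ + 1 : ℝ) : EReal) := by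
        rw [EReal.coe_lt_coe_iff]
        nlinarith [hK0]
      exact absurd ((le_of_lt (lt_of_le_of_lt h2 h3))) (not_le.mpr h1)
    have hx₀ne : f x₀ ≠ ⊤ := ne_top_of_le_ne_top (EReal.coe_ne_top _) hx₀top
    set F₀ : ℝ := (f x₀).toReal with hF₀def
    have hF₀ : f x₀ = (F₀ : EReal) := (EReal.coe_toReal hx₀ne (hproper.2 _)).symm
    have hmF₀ : m ≤ F₀ := by
      have := hmin x₀; rw [hF₀] at this; exact_mod_cast this
    -- lower bound along the segment
    have hlow : ∀ s : ℝ, 0 ≤ s → s < t₀ → ((F₀ - K * (t₀ - s) : ℝ) : EReal) ≤ f (s • z) := by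
      intro s hs0 hst
      apply ereal_coe_le_of_forall_eps
      intro ε hε
      have hc : ((F₀ - ε : ℝ) : EReal) < f x₀ := by
        rw [hF₀, EReal.coe_lt_coe_iff]; linarith
      have hev := hlsc x₀ _ hc
      have htd : Filter.Tendsto (fun t : ℝ => t • z) (nhds t₀) (nhds x₀) := by
        rw [hx₀]; exact hcontz.continuousAt
      have hev2 := htd.eventually hev
      obtain ⟨η, hη, hsub⟩ := Metric.eventually_nhds_iff.mp hev2
      set t' : ℝ := t₀ - min η (t₀ - s) / 2 with ht'def
      have hmin2 : 0 < min η (t₀ - s) := lt_min hη (by linarith)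
      have ht'lt : t' < t₀ := by rw [ht'def]; linarith
      have ht's : s < t' := by
        have : min η (t₀ - s) ≤ t₀ - s := min_le_right _ _
        rw [ht'def]; linarith
      have ht'0 : 0 < t' := lt_of_le_of_lt hs0 ht's
      have hdist : dist t' t₀ < η := by
        rw [Real.dist_eq, ht'def]
        have h1 : min η (t₀ - s) ≤ η := min_le_left _ _
        rw [abs_of_nonpos (by linarith)]
        linarith
      have hflb := hsub hdist
      obtain ⟨b', hb'⟩ := subdiff_nonempty hproper hconv hlsc (hACC t' (le_of_lt ht'0) ht'lt)
      have hvt' := hreal t' (le_of_lt ht'0) ht'lt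
      set vt' : ℝ := (f (t' • z)).toReal
      have hb'K := hslope t' ht'0 (lt_of_lt_of_le ht'lt ht₀le1) b' hb'
      have hvlb : F₀ - ε < vt' := by
        change ((F₀ - ε : ℝ) : EReal) < f (t' • z) at hflb
        rw [hvt', EReal.coe_lt_coe_iff] at hflb
        exact hflb
      -- subgradient inequality from t' • z to s • z
      have hsg := hb' (s • z)
      rw [hvt'] at hsg
      have happ : b' (s • z - t' • z) = (s - t') * b' z := by
        rw [← sub_smul, map_smul, smul_eq_mul]
      rw [happ] at hsg
      have hlb2 : (((s - t') * b' z + vt' : ℝ) : EReal) ≤ f (s • z) := by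
        rw [EReal.coe_add]; exact hsg
      refine le_trans ?_ hlb2
      rw [EReal.coe_le_coe_iff]
      have h5 : (s - t') * b' z ≥ -(t₀ - s) * K := by
        have h6 : (t' - s) * b' z ≤ (t' - s) * K :=
          mul_le_mul_of_nonneg_left hb'K (by linarith)
        nlinarith [h6]
      nlinarith [h5, hvlb]
    -- the difference-quotient epigraph set
    set DD : Set (X × ℝ) :=
      {p | ∃ u : ℝ, 0 < u ∧ u ≤ 1 ∧ f (x₀ + u • p.1) ≤ ((F₀ + u * p.2 : ℝ) : EReal)} with hDD
    have hDmono : ∀ (d : X) (c u u' : ℝ), 0 < u' → u' ≤ u → 0 < u → u ≤ 1 →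
        f (x₀ + u • d) ≤ ((F₀ + u * c : ℝ) : EReal) →
        f (x₀ + u' • d) ≤ ((F₀ + u' * c : ℝ) : EReal) := by
      intro d c u u' hu'0 hu'u hu0 hu1 hfu
      have hune : u ≠ 0 := ne_of_gt hu0
      have hcombo : x₀ + u' • d = (u'/u) • (x₀ + u • d) + (1 - u'/u) • x₀ := by
        match_scalars <;> field_simp <;> ring
      rw [hcombo]
      have h := econvex_real hconv hproper.2 (t := u'/u)
        (le_of_lt (div_pos hu'0 hu0)) ((div_le_one hu0).mpr hu'u) hfu (le_of_eq hF₀)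
      refine h.trans ?_
      rw [EReal.coe_le_coe_iff]
      have : u'/u * (F₀ + u * c) + (1 - u'/u) * F₀ = F₀ + u' * c := by
        field_simp; ring
      linarith [this.le, this.ge]
    have hDconv : Convex ℝ DD := by
      rintro ⟨d₁, c₁⟩ ⟨u₁, hu₁0, hu₁1, hf₁⟩ ⟨d₂, c₂⟩ ⟨u₂, hu₂0, hu₂1, hf₂⟩ a b ha hb hab
      have hb1 : b = 1 - a := by linarith
      subst hb1
      set u : ℝ := min u₁ u₂ with hudef
      have hu0 : 0 < u := lt_min hu₁0 hu₂0
      have h₁ := hDmono d₁ c₁ u₁ u hu0 (min_le_left _ _) hu₁0 hu₁1 hf₁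
      have h₂ := hDmono d₂ c₂ u₂ u hu0 (min_le_right _ _) hu₂0 hu₂1 hf₂
      refine ⟨u, hu0, le_trans (min_le_left _ _) hu₁1, ?_⟩
      have hpt : x₀ + u • (a • (d₁, c₁) + (1 - a) • (d₂, c₂)).1
          = a • (x₀ + u • d₁) + (1 - a) • (x₀ + u • d₂) := by
        show x₀ + u • (a • d₁ + (1 - a) • d₂) = _
        module
      rw [hpt]
      have h := econvex_real hconv hproper.2 (t := a) ha (by linarith) h₁ h₂
      refine h.trans ?_
      rw [EReal.coe_le_coe_iff]
      show a * (F₀ + u * c₁) + (1 - a) * (F₀ + u * c₂) ≤ F₀ + u * (a • (d₁, c₁) + (1 - a) • (d₂, c₂)).2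
      show a * (F₀ + u * c₁) + (1 - a) * (F₀ + u * c₂) ≤ F₀ + u * (a * c₁ + (1 - a) * c₂)
      ring_nf
      exact le_refl _
    set dbar : X := -x₀ with hdbar
    have hmidmem : (t₀/2) • z ∈ interior (fdom f) := hACC _ (by linarith) (by linarith)
    obtain ⟨ρ₄, hρ₄, M₄, hM₄⟩ := baire_bound hproper hconv hlsc hmidmem
    set M₃ : ℝ := 2*(M₄ - F₀) + 1 with hM₃def
    have hDbox : ∀ d ∈ Metric.ball dbar ρ₄, ∀ c : ℝ, M₃ < c → (d, c) ∈ DD := by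
      intro d hd c hc
      refine ⟨1/2, by norm_num, by norm_num, ?_⟩
      have he : x₀ + (1/2 : ℝ) • d - (t₀/2) • z = (1/2 : ℝ) • (d - dbar) := by
        rw [hdbar, hx₀]; module
      have hptmem : x₀ + (1/2 : ℝ) • d ∈ Metric.ball ((t₀/2) • z) ρ₄ := by
        rw [Metric.mem_ball, dist_eq_norm, he, norm_smul, Real.norm_eq_abs]
        rw [Metric.mem_ball, dist_eq_norm] at hd
        rw [abs_of_pos (by norm_num : (0:ℝ) < 1/2)]
        nlinarith [hd, norm_nonneg (d - dbar)]
      refine (hM₄ _ hptmem).trans ?_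
      rw [EReal.coe_le_coe_iff]
      linarith
    have hDlb : ∀ c : ℝ, ((dbar, c) : X × ℝ) ∈ DD → -(K * t₀) ≤ c := by
      rintro c ⟨u, hu0, hu1, hfu⟩
      have hpt : x₀ + u • dbar = ((1 - u) * t₀) • z := by
        rw [hdbar, hx₀]; module
      rw [hpt] at hfu
      have hl := hlow ((1 - u) * t₀) (by nlinarith) (by nlinarith)
      have hcomp := le_trans hl hfu
      rw [EReal.coe_le_coe_iff] at hcomp
      have he : t₀ - (1 - u) * t₀ = u * t₀ := by ring
      rw [he] at hcomp
      nlinarith [hcomp]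
    have hDP : ((dbar, -(K * t₀)) : X × ℝ) ∉ interior DD := by
      intro hmem
      obtain ⟨ε, hε, hsub⟩ := Metric.mem_nhds_iff.mp (mem_interior_iff_mem_nhds.mp hmem)
      have hpt : ((dbar, -(K * t₀) - ε/2) : X × ℝ) ∈ Metric.ball ((dbar, -(K * t₀)) : X × ℝ) ε := by
        rw [Metric.mem_ball, dist_eq_norm]
        have h1 : ((dbar, -(K * t₀) - ε/2) : X × ℝ) - (dbar, -(K * t₀)) = (0, -(ε/2)) := by
          ext <;> simp <;> ring
        rw [h1, Prod.norm_def]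
        simp [abs_of_pos hε]
        linarith
      have := hDlb _ (hsub hpt)
      linarith
    obtain ⟨v, hv⟩ := sep_lemma hDconv hρ₄ hDbox hDP
    -- v is a subgradient at x₀
    have hvsub : v ∈ subdiff f x₀ := by
      intro y
      by_cases hytop : f y = ⊤
      · rw [hytop]; exact le_top
      · set cy : ℝ := (f y).toReal with hcydef
        have hfy : f y = (cy : EReal) := (EReal.coe_toReal hytop (hproper.2 _)).symm
        have hkey : ∀ lam : ℝ, 1 ≤ lam →
            lam * v (y - x₀) - v dbar ≤ lam * (cy - F₀) - (-(K * t₀)) := by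
          intro lam hlam
          have hlampos : (0:ℝ) < lam := lt_of_lt_of_le one_pos hlam
          have hlamne : lam ≠ 0 := ne_of_gt hlampos
          have hmem : ((lam • (y - x₀), lam * (cy - F₀)) : X × ℝ) ∈ DD := by
            refine ⟨lam⁻¹, by positivity, ?_, ?_⟩
            · rw [inv_le_one_iff₀]; right; exact hlam
            · have he1 : x₀ + lam⁻¹ • lam • (y - x₀) = y := by
                rw [smul_smul, inv_mul_cancel₀ hlamne, one_smul]
                abel
              have he2 : F₀ + lam⁻¹ * (lam * (cy - F₀)) = cy := by
                field_simp; ring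
              rw [he1, he2, hfy]
          have h := hv _ hmem
          simp only at h
          rw [map_sub, map_smul, smul_eq_mul] at h
          linarith
        have hfin : v (y - x₀) ≤ cy - F₀ := by
          refine le_of_forall_pos_le_add fun ε hε => ?_
          set c₁ : ℝ := K * t₀ + v dbar with hc₁def
          set lam : ℝ := max 1 (|c₁|/ε + 1) with hlamdef
          have hlam1 : (1:ℝ) ≤ lam := le_max_left _ _
          have hlam2 : |c₁|/ε + 1 ≤ lam := le_max_right _ _
          have hlampos : (0:ℝ) < lam := lt_of_lt_of_le one_pos hlam1
          have h := hkey lam hlam1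
          have hc₁le : c₁ ≤ |c₁| := le_abs_self _
          have h2 : |c₁| + ε ≤ lam * ε := by
            have h3 := mul_le_mul_of_nonneg_right hlam2 (le_of_lt hε)
            have h4 : (|c₁|/ε + 1) * ε = |c₁| + ε := by field_simp
            linarith [h4 ▸ h3]
          have h3 : lam * v (y - x₀) ≤ lam * (cy - F₀ + ε) := by nlinarith
          exact le_of_mul_le_mul_left h3 hlampos
        rw [hF₀, hfy, ← EReal.coe_add, EReal.coe_le_coe_iff]
        linarith
    -- normal functional at x₀
    obtain ⟨w, hw⟩ := geometric_hahn_banach_open_point hfdomconv.interior isOpen_interior hx₀notΩ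
    have hwx₀ : ∀ y ∈ interior (fdom f), w y < w x₀ := hw
    have hwz : 0 < w z := by
      have h1 := hwx₀ 0 hintf
      rw [map_zero] at h1
      have h2 : w x₀ = t₀ * w z := by rw [hx₀, map_smul, smul_eq_mul]
      nlinarith [h1, h2.symm.le, h2.le]
    have hwdom : ∀ y ∈ fdom f, w y ≤ w x₀ := by
      intro y hy
      have hseq : ∀ n : ℕ, (1 - ((n:ℝ)+1)⁻¹) * w y < w x₀ := by
        intro n
        have hpos : (0:ℝ) < ((n:ℝ)+1)⁻¹ := by positivity
        have hle : ((n:ℝ)+1)⁻¹ ≤ 1 := by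
          rw [inv_le_one_iff₀]; right; exact_mod_cast Nat.le_add_left 1 n
        have hmem := hfdomconv.combo_interior_closure_mem_interior (a := ((n:ℝ)+1)⁻¹)
          (b := 1 - ((n:ℝ)+1)⁻¹) hintf (subset_closure hy) hpos (by linarith) (by ring)
        have := hwx₀ _ hmem
        rw [smul_zero, zero_add, map_smul, smul_eq_mul] at this
        exact this
      have htend : Filter.Tendsto (fun n : ℕ => (1 - ((n:ℝ)+1)⁻¹) * w y)
          Filter.atTop (nhds (w y)) := by
        have h0 : Filter.Tendsto (fun n : ℕ => ((n:ℝ)+1)⁻¹) Filter.atTop (nhds 0) :=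
          tendsto_one_div_add_atTop_nhds_zero_nat.congr (by intro n; rw [one_div])
        have := ((tendsto_const_nhds (x := (1:ℝ))).sub h0).mul_const (w y)
        simpa using this
      exact le_of_tendsto htend (Filter.Eventually.of_forall fun n => le_of_lt (hseq n))
    -- blow-up
    set c₀ : ℝ := t₀ * zs z + (1 - t₀) * (t₀ * as z + v z) with hc₀def
    have hwz' : 0 < (1 - t₀) * w z := mul_pos (by linarith) hwz
    set lam : ℝ := max 0 ((r - c₀)/((1 - t₀) * w z) + 1) with hlamdef
    have hlam0 : 0 ≤ lam := le_max_left _ _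
    have hbig : r - c₀ < lam * ((1 - t₀) * w z) := by
      have h1 : (r - c₀)/((1 - t₀) * w z) + 1 ≤ lam := le_max_right _ _
      have h2 := mul_le_mul_of_nonneg_right h1 (le_of_lt hwz')
      rw [add_mul, div_mul_cancel₀ _ (ne_of_gt hwz'), one_mul] at h2
      linarith
    have hsubl : v + lam • w ∈ subdiff f x₀ := by
      intro y
      by_cases hytop : f y = ⊤
      · rw [hytop]; exact le_top
      · set cy : ℝ := (f y).toReal with hcydef
        have hfy : f y = (cy : EReal) := (EReal.coe_toReal hytop (hproper.2 _)).symm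
        have h1 := subdiff_real hvsub hF₀ (le_of_eq hfy)
        have h2 : w y ≤ w x₀ := hwdom y hytop
        have happ : (v + lam • w) (y - x₀) = v (y - x₀) + lam * (w y - w x₀) := by
          simp only [ContinuousLinearMap.add_apply, ContinuousLinearMap.smul_apply,
            smul_eq_mul, map_sub]
          ring
        rw [hF₀, hfy, ← EReal.coe_add, EReal.coe_le_coe_iff, happ]
        nlinarith [h1, mul_nonneg hlam0 (sub_nonneg.mpr h2)]
    have hgapf := hgap2 t₀ (le_of_lt ht₀pos) ht₀le1 _ hsubl
    have happz : (v + lam • w) z = v z + lam * w z := by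
      rw [ContinuousLinearMap.add_apply, ContinuousLinearMap.smul_apply, smul_eq_mul]
    rw [happz] at hgapf
    nlinarith [hgapf, hbig]
end

section
/- Let X be a real Banach space, let A: X ⇉ X* be a maximally monotone linear relation, and let f: X → (−∞,+∞] be a proper lower semicontinuous convex function with 0 ∈ dom A ∩ int dom f. Suppose z ∈ X lies in the norm closure of dom A but not in dom A, and z lies in the norm closure of dom f. Then for every z* ∈ X* and every t ∈ (0,1), F_{A+∂f}(t z, t z*) ≥ t²⟨z, z*⟩. -/
open NormedSpace Set Pointwise

variable {X : Type*} [NormedAddCommGroup X] [NormedSpace ℝ X]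

open Metric Filter Topology

private lemma ereal_le_of_forall_sub {r : ℝ} {y : EReal}
    (h : ∀ ε : ℝ, 0 < ε → ((r - ε : ℝ) : EReal) ≤ y) : (r : EReal) ≤ y := by
  by_contra hc
  push_neg at hc
  have hytop : y ≠ ⊤ := ne_top_of_lt (hc.trans (EReal.coe_lt_top r))
  have hybot : y ≠ ⊥ := by
    intro hb
    have h1 := h 1 one_pos
    rw [hb, le_bot_iff] at h1
    exact (EReal.coe_ne_bot _) h1
  set c := y.toReal with hcdef
  have hy : y = (c : EReal) := (EReal.coe_toReal hytop hybot).symm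
  rw [hy] at hc h
  have hcr : c < r := EReal.coe_lt_coe_iff.mp hc
  have h2 := h ((r - c)/2) (by linarith)
  rw [EReal.coe_le_coe_iff] at h2
  linarith

private lemma near_graph_point
    {X : Type*} [NormedAddCommGroup X] [NormedSpace ℝ X]
    (A : X → Set (StrongDual ℝ X)) (hA : IsMaxMonotoneOp A)
    (S : Submodule ℝ (X × StrongDual ℝ X)) (hS : (S : Set (X × StrongDual ℝ X)) = gra A)
    (z : X) (hz₁ : z ∈ closure (domOp A)) (hz₂ : z ∉ domOp A)
    (δ ε : ℝ) (hδ : 0 < δ) (hε : 0 < ε) :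
    ∃ p ∈ gra A, ‖p.1 - z‖ < δ ∧ p.2 p.1 - p.2 z < ε := by
  by_contra hcon
  push_neg at hcon
  -- hcon : ∀ p ∈ gra A, ‖p.1 - z‖ < δ → ε ≤ p.2 p.1 - p.2 z
  set Cset : Set (X × ℝ) := {p | ∃ q ∈ gra A, q.1 = p.1 ∧ q.2 q.1 - q.2 z ≤ p.2} with hCdef
  set sset : Set (X × ℝ) := (Metric.ball z δ) ×ˢ (Set.Iio ε) with hsdef
  have hsopen : IsOpen sset := isOpen_ball.prod isOpen_Iio
  have hsconv : Convex ℝ sset := (convex_ball z δ).prod (convex_Iio ε)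
  have hCconv : Convex ℝ Cset := by
    rintro p ⟨q, hq, hq1, hq2⟩ p' ⟨q', hq', hq'1, hq'2⟩ a b ha hb hab
    have hqS : q ∈ S := by rw [← SetLike.mem_coe, hS]; exact hq
    have hq'S : q' ∈ S := by rw [← SetLike.mem_coe, hS]; exact hq'
    have hsumS : a • q + b • q' ∈ S := S.add_mem (S.smul_mem a hqS) (S.smul_mem b hq'S)
    refine ⟨a • q + b • q', ?_, ?_, ?_⟩
    · rw [← hS]; exact hsumS
    · simp [Prod.smul_fst, Prod.fst_add, hq1, hq'1]
    · have hmono := hA.1 q hq q' hq'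
      simp only [ContinuousLinearMap.sub_apply, map_sub] at hmono
      simp only [Prod.fst_add, Prod.snd_add, Prod.smul_fst, Prod.smul_snd,
        ContinuousLinearMap.add_apply, ContinuousLinearMap.coe_smul', Pi.smul_apply,
        map_add, map_smul, smul_eq_mul]
      have hb' : b = 1 - a := by linarith
      subst hb'
      nlinarith [mul_le_mul_of_nonneg_left hq2 ha, mul_le_mul_of_nonneg_left hq'2 hb,
        mul_le_mul_of_nonneg_left hmono (mul_nonneg ha hb)]
  have hdisj : Disjoint sset Cset := by
    rw [Set.disjoint_left]
    rintro p ⟨hp1, hp2⟩ ⟨q, hq, hq1, hq2⟩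
    have hnorm : ‖q.1 - z‖ < δ := by
      rw [hq1]
      simpa [dist_eq_norm] using hp1
    have := hcon q hq hnorm
    simp only [Set.mem_Iio] at hp2
    linarith
  obtain ⟨g, u, h₁, h₂⟩ := geometric_hahn_banach_open hsconv hsopen hCconv hdisj
  obtain ⟨w, hwdef⟩ : ∃ w : StrongDual ℝ X, w = g.comp (ContinuousLinearMap.inl ℝ X ℝ) := ⟨_, rfl⟩
  obtain ⟨s₀, hs₀def⟩ : ∃ s₀ : ℝ, s₀ = g (0, 1) := ⟨_, rfl⟩
  have hg : ∀ (x : X) (r : ℝ), g (x, r) = w x + r * s₀ := by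
    intro x r
    have hx : ((x, r) : X × ℝ) = (x, 0) + r • ((0 : X), (1 : ℝ)) := by
      simp [Prod.ext_iff]
    rw [hx, map_add, map_smul, smul_eq_mul, hwdef, hs₀def]
    rfl
  have h₁' : ∀ x ∈ Metric.ball z δ, ∀ r < ε, w x + r * s₀ < u := by
    intro x hx r hr
    have := h₁ (x, r) ⟨hx, hr⟩
    rwa [hg] at this
  have h₂' : ∀ p ∈ gra A, ∀ ρ : ℝ, p.2 p.1 - p.2 z ≤ ρ → u ≤ w p.1 + ρ * s₀ := by
    intro p hp ρ hρ
    have := h₂ (p.1, ρ) ⟨p, hp, rfl, hρ⟩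
    rwa [hg] at this
  have hzball : z ∈ Metric.ball z δ := mem_ball_self hδ
  have hs₀nonneg : 0 ≤ s₀ := by
    by_contra hneg
    push_neg at hneg
    set r : ℝ := min (ε - 1) ((u - w z) / s₀) with hrdef
    have hrlt : r < ε := lt_of_le_of_lt (min_le_left _ _) (by linarith)
    have h3 := h₁' z hzball r hrlt
    have h4 : r ≤ (u - w z) / s₀ := min_le_right _ _
    have h5 : ((u - w z) / s₀) * s₀ ≤ r * s₀ := mul_le_mul_of_nonpos_right h4 hneg.le
    rw [div_mul_cancel₀ _ (ne_of_lt hneg)] at h5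
    linarith
  rcases eq_or_lt_of_le hs₀nonneg with hs₀ | hs₀
  · -- s₀ = 0
    have hw0 : ∀ x ∈ domOp A, w x = 0 := by
      rintro x ⟨xs, hxs⟩
      by_contra hne
      have hpS : ((x, xs) : X × StrongDual ℝ X) ∈ S := by
        rw [← SetLike.mem_coe, hS]; exact hxs
      set c : ℝ := (u - 1) / (w x) with hcdef
      have hcS : c • ((x, xs) : X × StrongDual ℝ X) ∈ S := S.smul_mem c hpS
      have hcgra : (c • ((x, xs) : X × StrongDual ℝ X)) ∈ gra A := by rw [← hS]; exact hcS
      have h6 := h₂' _ hcgra ((c • ((x, xs) : X × StrongDual ℝ X)).2 (c • ((x, xs) : X × StrongDual ℝ X)).1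
        - (c • ((x, xs) : X × StrongDual ℝ X)).2 z) le_rfl
      rw [← hs₀] at h6
      simp only [Prod.smul_fst, map_smul, smul_eq_mul, mul_zero, add_zero] at h6
      rw [hcdef, div_mul_cancel₀ _ hne] at h6
      linarith
    have hwz : w z = 0 := by
      have hsub : closure (domOp A) ⊆ w ⁻¹' {0} :=
        closure_minimal (fun x hx => hw0 x hx) (isClosed_singleton.preimage w.continuous)
      exact hsub hz₁
    have hzeroS : ((0, 0) : X × StrongDual ℝ X) ∈ gra A := by
      rw [← hS]; exact S.zero_mem
    have h7 := h₂' _ hzeroS 0 (by simp)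
    simp only [map_zero, zero_mul, add_zero, zero_add] at h7
    have h8 := h₁' z hzball (ε - 1) (by linarith)
    rw [hwz, ← hs₀] at h8
    simp at h8
    linarith
  · -- s₀ > 0
    have hzb : w z + ε * s₀ ≤ u := by
      by_contra hlt
      push_neg at hlt
      set η : ℝ := (w z + ε * s₀ - u) / (2 * s₀) with hηdef
      have hηpos : 0 < η := div_pos (by linarith) (by positivity)
      have h9 := h₁' z hzball (ε - η) (by linarith)
      have : (ε - η) * s₀ = ε * s₀ - (w z + ε * s₀ - u) / 2 := by
        rw [hηdef]; field_simp
      linarith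
    obtain ⟨v, hvdef⟩ : ∃ v : StrongDual ℝ X, v = (-(s₀⁻¹)) • w := ⟨_, rfl⟩
    have hkey : ∀ p ∈ gra A, ε ≤ (v - p.2) (z - p.1) := by
      intro p hp
      have h10 := h₂' p hp (p.2 p.1 - p.2 z) le_rfl
      have h11 : w z + ε * s₀ ≤ w p.1 + (p.2 p.1 - p.2 z) * s₀ := le_trans hzb h10
      have hsne : s₀ ≠ 0 := ne_of_gt hs₀
      rw [hvdef]
      simp only [ContinuousLinearMap.sub_apply, ContinuousLinearMap.coe_smul', Pi.smul_apply,
        smul_eq_mul, map_sub]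
      set wz : ℝ := w z with hwz
      set wp : ℝ := w p.1 with hwp
      set d1 : ℝ := p.2 p.1 with hd1
      set d2 : ℝ := p.2 z with hd2
      -- h11 : wz + ε * s₀ ≤ wp + (d1 - d2) * s₀
      have h15 : ε - (d1 - d2) ≤ (wp - wz) / s₀ := by
        rw [le_div_iff₀ hs₀]
        nlinarith [h11]
      have heq2 : -s₀⁻¹ * (wz - wp) - (d2 - d1) = (wp - wz) / s₀ + (d1 - d2) := by
        field_simp
        ring
      linarith [h15, heq2]
    set B : X → Set (StrongDual ℝ X) := fun x => A x ∪ {xs | x = z ∧ xs = v} with hBdef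
    have hABsub : gra A ⊆ gra B := by
      intro p hp
      exact Set.mem_union_left _ hp
    have hBmono : IsMonotoneOp B := by
      rintro p hp q hq
      rcases hp with hp | ⟨hp1, hp2⟩ <;> rcases hq with hq | ⟨hq1, hq2⟩
      · exact hA.1 p hp q hq
      · -- q is (z, v)
        have := hkey p hp
        have hexp : (p.2 - q.2) (p.1 - q.1) = (v - p.2) (z - p.1) := by
          rw [hq1, hq2]
          simp only [ContinuousLinearMap.sub_apply, map_sub]
          ring
        rw [hexp]
        linarith
      · have := hkey q hq
        have hexp : (p.2 - q.2) (p.1 - q.1) = (v - q.2) (z - q.1) := by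
          rw [hp1, hp2]
        rw [hexp]
        linarith
      · rw [hp1, hp2, hq1, hq2]
        simp
    have heq := hA.2 B hBmono hABsub
    have hzv : ((z, v) : X × StrongDual ℝ X) ∈ gra B := Set.mem_union_right _ ⟨rfl, rfl⟩
    rw [heq] at hzv
    exact hz₂ ⟨v, hzv⟩

private lemma sublevel_closed {Y : Type*} [TopologicalSpace Y] {f : Y → EReal}
    (hlsc : LowerSemicontinuous f) (c : EReal) : IsClosed {x : Y | f x ≤ c} := by
  have h : {x : Y | f x ≤ c} = {x : Y | c < f x}ᶜ := by
    ext x; simp [not_lt]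
  rw [h, isClosed_compl_iff, isOpen_iff_mem_nhds]
  intro x hx
  exact hlsc x c hx

set_option maxHeartbeats 1000000 in
private lemma exists_subdiff_bound {X : Type*} [NormedAddCommGroup X] [NormedSpace ℝ X]
    [CompleteSpace X]
    (f : X → EReal) (hproper : EProper f) (hconv : EConvex f) (hlsc : LowerSemicontinuous f)
    (x₀ : X) (hx₀ : x₀ ∈ interior (fdom f)) :
    ∃ ρ : ℝ, 0 < ρ ∧ ∃ M : ℝ, 0 ≤ M ∧
      ∀ x ∈ Metric.ball x₀ ρ, ∃ g : StrongDual ℝ X, g ∈ subdiff f x ∧ ‖g‖ ≤ M := by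
  classical
  -- Step A: a closed ball inside the domain
  obtain ⟨r0, hr0, hball⟩ := Metric.mem_nhds_iff.1 (mem_interior_iff_mem_nhds.1 hx₀)
  set r : ℝ := r0 / 2 with hrdef
  have hr : 0 < r := by positivity
  have hKsub : Metric.closedBall x₀ r ⊆ fdom f :=
    (Metric.closedBall_subset_ball (by rw [hrdef]; linarith)).trans hball
  haveI : CompleteSpace (Metric.closedBall x₀ r) := Metric.isClosed_closedBall.completeSpace_coe
  haveI : Nonempty (Metric.closedBall x₀ r) := ⟨⟨x₀, Metric.mem_closedBall_self hr.le⟩⟩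
  -- Baire category
  set F : ℕ → Set (Metric.closedBall x₀ r) := fun n => {p | f ↑p ≤ ((n : ℝ) : EReal)} with hFdef
  have hFclosed : ∀ n, IsClosed (F n) := fun n =>
    (sublevel_closed hlsc (((n : ℝ) : EReal))).preimage continuous_subtype_val
  have hFunion : ⋃ n, F n = Set.univ := by
    ext p
    simp only [Set.mem_iUnion, Set.mem_univ, iff_true]
    have hpd : f ↑p ≠ ⊤ := hKsub p.2
    have hpb : f ↑p ≠ ⊥ := hproper.2 _
    obtain ⟨n, hn⟩ := exists_nat_ge (f ↑p).toReal
    refine ⟨n, ?_⟩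
    show f ↑p ≤ ((n : ℝ) : EReal)
    rw [← EReal.coe_toReal hpd hpb]
    exact EReal.coe_le_coe_iff.2 hn
  obtain ⟨n, ⟨pnt, hpnt⟩⟩ := nonempty_interior_of_iUnion_of_closed hFclosed hFunion
  obtain ⟨η, hη, hballsub⟩ := Metric.mem_nhds_iff.1 (mem_interior_iff_mem_nhds.1 hpnt)
  have hup0 : ∀ v : X, v ∈ Metric.closedBall x₀ r → dist v ↑pnt < η → f v ≤ ((n : ℝ) : EReal) := by
    intro v hv hd
    have hm : (⟨v, hv⟩ : Metric.closedBall x₀ r) ∈ Metric.ball pnt η := by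
      rw [Metric.mem_ball, Subtype.dist_eq]
      exact hd
    exact hballsub hm
  -- a ball inside the open ball where f ≤ n
  set σ : ℝ := min (η / (2 * r)) 1 with hσdef
  have hσpos : 0 < σ := lt_min (by positivity) one_pos
  have hσle1 : σ ≤ 1 := min_le_right _ _
  set x₁ : X := x₀ + (1 - σ) • ((pnt : X) - x₀) with hx₁def
  have hpntball : dist (pnt : X) x₀ ≤ r := Metric.mem_closedBall.1 pnt.2
  have hpntnorm : ‖(pnt : X) - x₀‖ ≤ r := by rw [← dist_eq_norm]; exact hpntball
  have hσr : σ * r ≤ η / 2 := by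
    rcases min_cases (η / (2 * r)) 1 with ⟨h1, _⟩ | ⟨h1, h2⟩
    · rw [hσdef, h1]
      have heqq : η / (2 * r) * r = η / 2 := by
        field_simp
      rw [heqq]
    · rw [hσdef, h1, one_mul]
      have h3 : 2 * r < η := (one_lt_div (by positivity)).1 h2
      linarith
  have hd₁ : dist x₁ x₀ ≤ (1 - σ) * r := by
    rw [dist_eq_norm, hx₁def]
    have h2 : x₀ + (1 - σ) • ((pnt : X) - x₀) - x₀ = (1 - σ) • ((pnt : X) - x₀) := by module
    rw [h2, norm_smul, Real.norm_eq_abs, abs_of_nonneg (by linarith)]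
    nlinarith
  have hd₁r : dist x₁ x₀ < r := lt_of_le_of_lt hd₁ (by nlinarith)
  have hd₂ : dist x₁ (pnt : X) ≤ η / 2 := by
    have hx₁p : x₁ - (pnt : X) = σ • (x₀ - (pnt : X)) := by rw [hx₁def]; module
    rw [dist_eq_norm, hx₁p, norm_smul, Real.norm_eq_abs, abs_of_pos hσpos]
    have h1 : ‖x₀ - (pnt : X)‖ ≤ r := by rw [← dist_eq_norm, dist_comm]; exact hpntball
    nlinarith
  set ρ₁ : ℝ := min (r - dist x₁ x₀) (η / 2) with hρ₁def
  have hρ₁ : 0 < ρ₁ := lt_min (by linarith) (by linarith)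
  have hub1 : ∀ v ∈ Metric.ball x₁ ρ₁, f v ≤ ((n : ℝ) : EReal) := by
    intro v hv
    rw [Metric.mem_ball] at hv
    have hv1 : dist v x₀ ≤ r := by
      calc dist v x₀ ≤ dist v x₁ + dist x₁ x₀ := dist_triangle _ _ _
        _ ≤ r := by
            have := min_le_left (r - dist x₁ x₀) (η / 2)
            rw [← hρ₁def] at this
            linarith
    have hv2 : dist v ↑pnt < η := by
      calc dist v ↑pnt ≤ dist v x₁ + dist x₁ ↑pnt := dist_triangle _ _ _
        _ < η := by
            have := min_le_right (r - dist x₁ x₀) (η / 2)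
            rw [← hρ₁def] at this
            linarith
    exact hup0 v (Metric.mem_closedBall.2 hv1) hv2
  -- reflection to get an upper bound on a ball centred at x₀
  set x₂ : X := (2 : ℝ) • x₀ - x₁ with hx₂def
  have hx₂ball : x₂ ∈ Metric.closedBall x₀ r := by
    rw [Metric.mem_closedBall, dist_eq_norm]
    have h3 : x₂ - x₀ = x₀ - x₁ := by rw [hx₂def]; module
    rw [h3, ← dist_eq_norm, dist_comm]
    exact hd₁r.le
  have hx₂dom : f x₂ ≠ ⊤ := hKsub hx₂ball
  set c₂ : ℝ := (f x₂).toReal with hc₂def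
  have hfx₂ : f x₂ = (c₂ : EReal) := (EReal.coe_toReal hx₂dom (hproper.2 _)).symm
  set n₁ : ℝ := ((n : ℝ) + c₂) / 2 with hn₁def
  have hub : ∀ u ∈ Metric.ball x₀ (ρ₁ / 2), f u ≤ (n₁ : EReal) := by
    intro u hu
    set vv : X := (2 : ℝ) • u - x₂ with hvvdef
    have hvball : vv ∈ Metric.ball x₁ ρ₁ := by
      rw [Metric.mem_ball, dist_eq_norm]
      have h4 : vv - x₁ = (2 : ℝ) • (u - x₀) := by rw [hvvdef, hx₂def]; module
      rw [h4, norm_smul, Real.norm_ofNat]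
      have h5 := Metric.mem_ball.1 hu
      rw [dist_eq_norm] at h5
      linarith
    have hfv := hub1 vv hvball
    have hfvt : f vv ≠ ⊤ := ne_top_of_le_ne_top (EReal.coe_ne_top _) hfv
    set cv : ℝ := (f vv).toReal with hcvdef
    have hfveq : f vv = (cv : EReal) := (EReal.coe_toReal hfvt (hproper.2 _)).symm
    have hcvn : cv ≤ (n : ℝ) := by
      rw [hfveq] at hfv
      exact EReal.coe_le_coe_iff.1 hfv
    have hcomb := hconv vv x₂ (1/2) (by norm_num) (by norm_num)
    have hueq : u = (1/2 : ℝ) • vv + (1 - (1/2) : ℝ) • x₂ := by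
      rw [hvvdef]; module
    rw [← hueq, hfveq, hfx₂] at hcomb
    have hcoe : ((1/2 : ℝ) : EReal) * (cv : EReal) + (((1 - 1/2 : ℝ)) : EReal) * (c₂ : EReal)
        = (((1/2) * cv + (1 - 1/2) * c₂ : ℝ) : EReal) := by
      rw [← EReal.coe_mul, ← EReal.coe_mul, ← EReal.coe_add]
    rw [hcoe] at hcomb
    refine le_trans hcomb ?_
    rw [EReal.coe_le_coe_iff]
    rw [hn₁def]
    linarith
  -- lower bound via lsc
  have hx₀dom : f x₀ ≠ ⊤ := interior_subset hx₀
  set c₀ : ℝ := (f x₀).toReal with hc₀def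
  have hfx₀ : f x₀ = (c₀ : EReal) := (EReal.coe_toReal hx₀dom (hproper.2 _)).symm
  set m : ℝ := c₀ - 1 with hmdef
  have hlb0 : ∀ᶠ y in nhds x₀, ((m : ℝ) : EReal) < f y := by
    apply hlsc x₀
    rw [hfx₀]
    exact EReal.coe_lt_coe_iff.2 (by linarith)
  obtain ⟨ρ₃, hρ₃, hlb⟩ := Metric.eventually_nhds_iff_ball.1 hlb0
  set ρ : ℝ := min (ρ₁ / 2) ρ₃ with hρdef
  have hρ : 0 < ρ := lt_min (by linarith) hρ₃
  have hballub : ∀ y ∈ Metric.ball x₀ ρ, f y ≤ (n₁ : EReal) ∧ ((m : ℝ) : EReal) < f y := by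
    intro y hy
    constructor
    · exact hub y (Metric.ball_subset_ball (min_le_left _ _) hy)
    · exact hlb y (Metric.ball_subset_ball (min_le_right _ _) hy)
  have hmn : m < n₁ := by
    have h6 := (hballub x₀ (Metric.mem_ball_self hρ)).1
    rw [hfx₀] at h6
    have := EReal.coe_le_coe_iff.1 h6
    rw [hmdef]
    linarith
  -- the subdifferential on the ball of radius ρ/2
  refine ⟨ρ / 2, by positivity, 4 * (n₁ - m) / ρ, div_nonneg (by linarith) hρ.le, ?_⟩
  intro x hx
  have hxball : x ∈ Metric.ball x₀ ρ := Metric.ball_subset_ball (by linarith) hx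
  have hfxt : f x ≠ ⊤ := ne_top_of_le_ne_top (EReal.coe_ne_top _) (hballub x hxball).1
  set fx : ℝ := (f x).toReal with hfxdef
  have hfx : f x = (fx : EReal) := (EReal.coe_toReal hfxt (hproper.2 _)).symm
  have hfxn : fx ≤ n₁ := by
    have := (hballub x hxball).1
    rw [hfx] at this
    exact EReal.coe_le_coe_iff.1 this
  have hfxm : m < fx := by
    have := (hballub x hxball).2
    rw [hfx] at this
    exact EReal.coe_lt_coe_iff.1 this
  -- epigraph separation
  set epi : Set (X × ℝ) := {p | f p.1 ≤ (p.2 : EReal)} with hepidef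
  have hepiconv : Convex ℝ epi := by
    rintro p hp q hq a b ha hb hab
    have hpt : f p.1 ≠ ⊤ := ne_top_of_le_ne_top (EReal.coe_ne_top _) hp
    have hqt : f q.1 ≠ ⊤ := ne_top_of_le_ne_top (EReal.coe_ne_top _) hq
    set fp : ℝ := (f p.1).toReal with hfpdef
    set fq : ℝ := (f q.1).toReal with hfqdef
    have hfpeq : f p.1 = (fp : EReal) := (EReal.coe_toReal hpt (hproper.2 _)).symm
    have hfqeq : f q.1 = (fq : EReal) := (EReal.coe_toReal hqt (hproper.2 _)).symm
    have hfp2 : fp ≤ p.2 := by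
      have := hp
      rw [Set.mem_setOf_eq, hfpeq] at this
      exact EReal.coe_le_coe_iff.1 this
    have hfq2 : fq ≤ q.2 := by
      have := hq
      rw [Set.mem_setOf_eq, hfqeq] at this
      exact EReal.coe_le_coe_iff.1 this
    have hcomb := hconv p.1 q.1 a ha (by linarith)
    have hba : (1 : ℝ) - a = b := by linarith
    rw [hba, hfpeq, hfqeq] at hcomb
    show f ((a • p + b • q).1) ≤ (((a • p + b • q).2 : ℝ) : EReal)
    have h1 : (a • p + b • q).1 = a • p.1 + b • q.1 := rfl
    have h2 : (a • p + b • q).2 = a * p.2 + b * q.2 := rfl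
    rw [h1, h2]
    refine le_trans hcomb ?_
    have hcoe : ((a : ℝ) : EReal) * (fp : EReal) + ((b : ℝ) : EReal) * (fq : EReal)
        = ((a * fp + b * fq : ℝ) : EReal) := by
      rw [← EReal.coe_mul, ← EReal.coe_mul, ← EReal.coe_add]
    rw [hcoe, EReal.coe_le_coe_iff]
    nlinarith [mul_le_mul_of_nonneg_left hfp2 ha, mul_le_mul_of_nonneg_left hfq2 hb]
  have hO : Metric.ball x₀ ρ ×ˢ Set.Ioi n₁ ⊆ epi := by
    rintro ⟨y, s⟩ ⟨hy, hs⟩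
    refine le_trans (hballub y hy).1 ?_
    exact EReal.coe_le_coe_iff.2 (le_of_lt hs)
  have hOopen : IsOpen (Metric.ball x₀ ρ ×ˢ Set.Ioi n₁) := Metric.isOpen_ball.prod isOpen_Ioi
  have hOint : ((x₀, n₁ + 1) : X × ℝ) ∈ interior epi :=
    interior_maximal hO hOopen ⟨Metric.mem_ball_self hρ, by norm_num⟩
  have hp₀ : ((x, fx) : X × ℝ) ∉ interior epi := by
    intro hmem
    obtain ⟨η', hη', hb⟩ := Metric.isOpen_iff.1 isOpen_interior _ hmem
    have hdd : dist (fx - η' / 2) fx = η' / 2 := by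
      rw [Real.dist_eq, show fx - η' / 2 - fx = -(η' / 2) by ring, abs_neg,
        abs_of_pos (by linarith)]
    have hmemball : ((x, fx - η' / 2) : X × ℝ) ∈ Metric.ball ((x, fx) : X × ℝ) η' := by
      rw [Metric.mem_ball, Prod.dist_eq]
      simp only [dist_self, hdd]
      rw [max_eq_right (by linarith)]
      linarith
    have hin : ((x, fx - η' / 2) : X × ℝ) ∈ epi := interior_subset (hb hmemball)
    rw [Set.mem_setOf_eq, hfx] at hin
    have := EReal.coe_le_coe_iff.1 hin
    linarith
  obtain ⟨g, hg⟩ := geometric_hahn_banach_open_point hepiconv.interior isOpen_interior hp₀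
  obtain ⟨w, hwdef⟩ : ∃ w : StrongDual ℝ X, w = g.comp (ContinuousLinearMap.inl ℝ X ℝ) := ⟨_, rfl⟩
  obtain ⟨s₀, hs₀def⟩ : ∃ s₀ : ℝ, s₀ = g (0, 1) := ⟨_, rfl⟩
  have hgxr : ∀ (y : X) (s : ℝ), g (y, s) = w y + s * s₀ := by
    intro y s
    have hx2 : ((y, s) : X × ℝ) = (y, 0) + s • ((0 : X), (1 : ℝ)) := by
      simp [Prod.ext_iff]
    rw [hx2, map_add, map_smul, smul_eq_mul, hwdef, hs₀def]
    rfl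
  have hs₀neg : s₀ < 0 := by
    have h4 : ((x, max n₁ fx + 1) : X × ℝ) ∈ interior epi :=
      interior_maximal hO hOopen ⟨hxball, by
        simp only [Set.mem_Ioi]
        have := le_max_left n₁ fx
        linarith⟩
    have h5 := hg _ h4
    rw [hgxr, hgxr] at h5
    by_contra hcon
    push_neg at hcon
    have h6 : fx ≤ max n₁ fx + 1 := by
      have := le_max_right n₁ fx
      linarith
    nlinarith
  have hepile : ∀ p ∈ epi, g p ≤ g ((x, fx) : X × ℝ) := by
    intro p hp
    have hseq : ∀ k : ℕ, g ((1 / ((k : ℝ) + 1)) • ((x₀, n₁ + 1) : X × ℝ)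
        + (1 - 1 / ((k : ℝ) + 1)) • p) < g ((x, fx) : X × ℝ) := by
      intro k
      have hk1 : (0 : ℝ) < 1 / ((k : ℝ) + 1) := by positivity
      have hk2 : 1 / ((k : ℝ) + 1) ≤ 1 := by
        rw [div_le_one (by positivity)]
        have : (0 : ℝ) ≤ (k : ℝ) := Nat.cast_nonneg k
        linarith
      exact hg _ (hepiconv.combo_interior_closure_mem_interior hOint (subset_closure hp)
        hk1 (by linarith) (by ring))
    have h0 : Filter.Tendsto (fun k : ℕ => (1 / ((k : ℝ) + 1))) Filter.atTop (nhds 0) :=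
      tendsto_one_div_add_atTop_nhds_zero_nat
    have htt : Filter.Tendsto (fun k : ℕ => (1 / ((k : ℝ) + 1)) • ((x₀, n₁ + 1) : X × ℝ)
        + (1 - 1 / ((k : ℝ) + 1)) • p) Filter.atTop (nhds p) := by
      have h7a : Filter.Tendsto (fun k : ℕ => (1 : ℝ) - 1 / ((k : ℝ) + 1))
          Filter.atTop (nhds (1 - 0)) := Filter.Tendsto.const_sub 1 h0
      have h7 := (h0.smul_const ((x₀, n₁ + 1) : X × ℝ)).add (h7a.smul_const p)
      simpa using h7
    exact le_of_tendsto ((g.continuous.tendsto p).comp htt)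
      (Filter.Eventually.of_forall fun k => (hseq k).le)
  have hsne : s₀ ≠ 0 := ne_of_lt hs₀neg
  obtain ⟨bs, hbsdef⟩ : ∃ bs : StrongDual ℝ X, bs = (-s₀)⁻¹ • w := ⟨_, rfl⟩
  have hbsapp : ∀ v : X, bs v = (-s₀)⁻¹ * w v := by
    intro v; rw [hbsdef]; rfl
  have hkey : ∀ y : X, f y ≠ ⊤ → bs (y - x) + fx ≤ (f y).toReal := by
    intro y hy
    set fy : ℝ := (f y).toReal with hfydef
    have hfyeq : f y = (fy : EReal) := (EReal.coe_toReal hy (hproper.2 _)).symm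
    have hyepi : ((y, fy) : X × ℝ) ∈ epi := by
      show f y ≤ ((fy : ℝ) : EReal)
      rw [hfyeq]
    have h5 := hepile _ hyepi
    rw [hgxr, hgxr] at h5
    have hs₀' : (0 : ℝ) < -s₀ := by linarith
    have h6 : w y - w x ≤ (fx - fy) * s₀ := by linarith
    have h7 : (-s₀)⁻¹ * (w y - w x) ≤ (-s₀)⁻¹ * ((fx - fy) * s₀) :=
      mul_le_mul_of_nonneg_left h6 (inv_nonneg.2 hs₀'.le)
    have h8 : (-s₀)⁻¹ * ((fx - fy) * s₀) = fy - fx := by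
      field_simp
      ring
    rw [hbsapp, map_sub]
    linarith
  have hsubd : bs ∈ subdiff f x := by
    intro y
    by_cases hy : f y = ⊤
    · rw [hy]; exact le_top
    · have h9 := hkey y hy
      have hfyeq : f y = (((f y).toReal : ℝ) : EReal) := (EReal.coe_toReal hy (hproper.2 _)).symm
      rw [hfx, hfyeq, ← EReal.coe_add, EReal.coe_le_coe_iff]
      exact h9
  have hkey2 : ∀ v : X, ‖v‖ < ρ / 2 → bs v ≤ n₁ - m := by
    intro v hv
    have hxv : x + v ∈ Metric.ball x₀ ρ := by
      rw [Metric.mem_ball]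
      have hdx : dist (x + v) x = ‖v‖ := by
        rw [dist_eq_norm]; simp
      calc dist (x + v) x₀ ≤ dist (x + v) x + dist x x₀ := dist_triangle _ _ _
        _ < ρ := by
            have := Metric.mem_ball.1 hx
            rw [hdx]
            linarith
    have hxvt : f (x + v) ≠ ⊤ := ne_top_of_le_ne_top (EReal.coe_ne_top _) (hballub _ hxv).1
    have h9 := hkey (x + v) hxvt
    have h10 : (f (x + v)).toReal ≤ n₁ := by
      have h11 := (hballub _ hxv).1
      rw [(EReal.coe_toReal hxvt (hproper.2 _)).symm] at h11
      exact EReal.coe_le_coe_iff.1 h11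
    have h12 : bs (x + v - x) = bs v := by rw [add_sub_cancel_left]
    rw [h12] at h9
    linarith
  have hMnn : (0 : ℝ) ≤ n₁ - m := by linarith
  refine ⟨bs, hsubd, ContinuousLinearMap.opNorm_le_bound _ (by positivity) ?_⟩
  intro u
  rcases eq_or_ne u 0 with hu | hu
  · simp [hu]
  · have hupos : 0 < ‖u‖ := norm_pos_iff.2 hu
    set wv : X := (ρ / 4 / ‖u‖) • u with hwvdef
    have hwvnorm : ‖wv‖ = ρ / 4 := by
      rw [hwvdef, norm_smul, Real.norm_eq_abs, abs_of_pos (by positivity),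
        div_mul_cancel₀ _ hupos.ne']
    have h12 : bs wv ≤ n₁ - m := hkey2 wv (by rw [hwvnorm]; linarith)
    have h13 : bs (-wv) ≤ n₁ - m := hkey2 (-wv) (by rw [norm_neg, hwvnorm]; linarith)
    rw [map_neg] at h13
    have h14 : |bs wv| ≤ n₁ - m := abs_le.2 ⟨by linarith, h12⟩
    have h15 : bs wv = (ρ / 4 / ‖u‖) * bs u := by rw [hwvdef, map_smul, smul_eq_mul]
    have h16 : |bs wv| = (ρ / 4 / ‖u‖) * |bs u| := by
      rw [h15, abs_mul, abs_of_pos (by positivity)]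
    have h17 : (ρ / 4 / ‖u‖) * |bs u| ≤ n₁ - m := by rw [← h16]; exact h14
    have h18 : |bs u| ≤ (n₁ - m) / (ρ / 4 / ‖u‖) := by
      rw [le_div_iff₀ (by positivity)]
      linarith [h17]
    rw [Real.norm_eq_abs]
    calc |bs u| ≤ (n₁ - m) / (ρ / 4 / ‖u‖) := h18
      _ = 4 * (n₁ - m) / ρ * ‖u‖ := by
          field_simp

set_option maxHeartbeats 1000000 in
theorem fitz_scaled_ge'
    {X : Type*} [NormedAddCommGroup X] [NormedSpace ℝ X] [CompleteSpace X]
    (A : X → Set (StrongDual ℝ X)) (hA : IsMaxMonotoneOp A) (hAlin : IsLinearRelation A)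
    (f : X → EReal) (hproper : EProper f) (hconv : EConvex f)
    (hlsc : LowerSemicontinuous f)
    (h0 : (0 : X) ∈ domOp A ∩ interior (fdom f))
    (z : X) (hz₁ : z ∈ closure (domOp A)) (hz₂ : z ∉ domOp A)
    (hz₃ : z ∈ closure (fdom f)) :
    ∀ zs : StrongDual ℝ X, ∀ t : ℝ, 0 < t → t < 1 →
      ((t ^ 2 * zs z : ℝ) : EReal) ≤ fitz (opSum A (subdiff f)) (t • z, t • zs) := by
  intro zs t ht0 ht1
  obtain ⟨S, hS⟩ := hAlin
  obtain ⟨h0A, h0f⟩ := h0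
  -- the domain of f is convex
  have hDconv : Convex ℝ (fdom f) := by
    intro x hx y hy a b ha hb hab
    have hxt : f x ≠ ⊤ := hx
    have hyt : f y ≠ ⊤ := hy
    have hfxeq : f x = (((f x).toReal : ℝ) : EReal) := (EReal.coe_toReal hxt (hproper.2 _)).symm
    have hfyeq : f y = (((f y).toReal : ℝ) : EReal) := (EReal.coe_toReal hyt (hproper.2 _)).symm
    have hcomb := hconv x y a ha (by linarith)
    have hba : (1 : ℝ) - a = b := by linarith
    rw [hba, hfxeq, hfyeq] at hcomb
    have hcoe : ((a : ℝ) : EReal) * (((f x).toReal : ℝ) : EReal)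
        + ((b : ℝ) : EReal) * (((f y).toReal : ℝ) : EReal)
        = ((a * (f x).toReal + b * (f y).toReal : ℝ) : EReal) := by
      rw [← EReal.coe_mul, ← EReal.coe_mul, ← EReal.coe_add]
    rw [hcoe] at hcomb
    show f (a • x + b • y) ≠ ⊤
    exact ne_top_of_le_ne_top (EReal.coe_ne_top _) hcomb
  have htz : t • z ∈ interior (fdom f) := by
    have h := hDconv.combo_interior_closure_mem_interior h0f hz₃
      (a := 1 - t) (b := t) (by linarith) ht0.le (by ring)
    simpa using h
  obtain ⟨ρ, hρ, M, hMnn, hM⟩ := exists_subdiff_bound f hproper hconv hlsc _ htz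
  apply ereal_le_of_forall_sub
  intro ε hε
  set δ : ℝ := min (ρ / (2 * t)) (min (ε / (3 * (‖zs‖ + 1))) (ε / (3 * (M + 1)))) with hδdef
  have hδpos : 0 < δ := lt_min (by positivity) (lt_min (by positivity) (by positivity))
  obtain ⟨p, hp, hpz, hpval⟩ :=
    near_graph_point A hA S hS z hz₁ hz₂ δ (ε / 3) hδpos (by positivity)
  have hδ1 : t * δ ≤ ρ / 2 := by
    calc t * δ ≤ t * (ρ / (2 * t)) := mul_le_mul_of_nonneg_left (min_le_left _ _) ht0.le
      _ = ρ / 2 := by field_simp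
  have hδ2 : δ ≤ ε / (3 * (‖zs‖ + 1)) := le_trans (min_le_right _ _) (min_le_left _ _)
  have hδ3 : δ ≤ ε / (3 * (M + 1)) := le_trans (min_le_right _ _) (min_le_right _ _)
  have htap : t • p.1 ∈ Metric.ball (t • z) ρ := by
    rw [Metric.mem_ball, dist_eq_norm]
    have hsm : t • p.1 - t • z = t • (p.1 - z) := by module
    rw [hsm, norm_smul, Real.norm_eq_abs, abs_of_pos ht0]
    nlinarith [hpz]
  obtain ⟨bs, hbssub, hbsnorm⟩ := hM (t • p.1) htap
  have hpgra2 : (t • p : X × StrongDual ℝ X) ∈ gra A := by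
    rw [← hS]
    exact SetLike.mem_coe.2 (S.smul_mem t (by rw [← SetLike.mem_coe, hS]; exact hp))
  have hq : ((t • p.1, t • p.2 + bs) : X × StrongDual ℝ X) ∈ gra (opSum A (subdiff f)) := by
    show t • p.2 + bs ∈ A (t • p.1) + subdiff f (t • p.1)
    exact Set.add_mem_add hpgra2 hbssub
  have hsup : ((((t • zs : StrongDual ℝ X) (t • p.1) + (t • p.2 + bs) (t • z)
      - (t • p.2 + bs) (t • p.1) : ℝ)) : EReal)
      ≤ fitz (opSum A (subdiff f)) (t • z, t • zs) := by
    have h := le_iSup₂ (f := fun (q : X × StrongDual ℝ X) (_ : q ∈ gra (opSum A (subdiff f))) =>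
      ((((t • z, t • zs) : X × StrongDual ℝ X).2 q.1
        + q.2 ((t • z, t • zs) : X × StrongDual ℝ X).1 - q.2 q.1 : ℝ) : EReal))
      ((t • p.1, t • p.2 + bs) : X × StrongDual ℝ X) hq
    exact h
  refine le_trans (EReal.coe_le_coe_iff.2 ?_) hsup
  -- real arithmetic
  have hzsbound : |zs p.1 - zs z| ≤ ‖zs‖ * δ := by
    have hmapsub : zs p.1 - zs z = zs (p.1 - z) := (map_sub zs p.1 z).symm
    rw [hmapsub, ← Real.norm_eq_abs]
    calc ‖zs (p.1 - z)‖ ≤ ‖zs‖ * ‖p.1 - z‖ := zs.le_opNorm _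
      _ ≤ ‖zs‖ * δ := mul_le_mul_of_nonneg_left hpz.le (norm_nonneg zs)
  have hbsbound : |bs z - bs p.1| ≤ M * δ := by
    have hmapsub : bs z - bs p.1 = bs (z - p.1) := (map_sub bs z p.1).symm
    rw [hmapsub, ← Real.norm_eq_abs]
    calc ‖bs (z - p.1)‖ ≤ ‖bs‖ * ‖z - p.1‖ := bs.le_opNorm _
      _ ≤ M * δ := by
          rw [norm_sub_rev]
          exact mul_le_mul hbsnorm hpz.le (norm_nonneg _) hMnn
  have herr1 : ‖zs‖ * δ ≤ ε / 3 := by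
    have h := hδ2
    rw [le_div_iff₀ (by positivity)] at h
    nlinarith [norm_nonneg zs, hδpos.le]
  have herr3 : M * δ ≤ ε / 3 := by
    have h := hδ3
    rw [le_div_iff₀ (by positivity)] at h
    nlinarith [hMnn, hδpos.le]
  have e1 := abs_le.1 hzsbound
  have e3 := abs_le.1 hbsbound
  have ht2 : (0 : ℝ) ≤ t ^ 2 := sq_nonneg t
  have ht2' : t ^ 2 ≤ 1 := by nlinarith
  have q1 : -(ε / 3) ≤ t ^ 2 * (zs p.1 - zs z) := by
    have hh := mul_nonneg ht2 (by linarith [e1.1] : (0 : ℝ) ≤ zs p.1 - zs z + ‖zs‖ * δ)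
    nlinarith [mul_nonneg (by linarith : (0:ℝ) ≤ 1 - t ^ 2)
      (mul_nonneg (norm_nonneg zs) hδpos.le)]
  have q2 : -(ε / 3) ≤ t ^ 2 * (p.2 z - p.2 p.1) := by
    have hh := mul_nonneg ht2 (by linarith [hpval] : (0 : ℝ) ≤ p.2 z - p.2 p.1 + ε / 3)
    nlinarith [mul_nonneg (by linarith : (0:ℝ) ≤ 1 - t ^ 2) (by linarith : (0:ℝ) ≤ ε / 3)]
  have q3 : -(ε / 3) ≤ t * (bs z - bs p.1) := by
    have hh := mul_nonneg ht0.le (by linarith [e3.1] : (0 : ℝ) ≤ bs z - bs p.1 + M * δ)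
    nlinarith [mul_nonneg (by linarith : (0:ℝ) ≤ 1 - t)
      (mul_nonneg hMnn hδpos.le)]
  simp only [ContinuousLinearMap.add_apply, ContinuousLinearMap.coe_smul', Pi.smul_apply,
    map_smul, smul_eq_mul]
  nlinarith [q1, q2, q3]

/-- If `A` is a maximally monotone linear relation, `f` is proper lsc convex with
`0 ∈ dom A ∩ int dom f`, and `z ∈ closure (dom A) \ dom A` with `z ∈ closure (dom f)`,
then `F_{A+∂f}(tz, tz*) ≥ t²⟨z,z*⟩` for every `z*` and every `t ∈ (0,1)`. -/
theorem fitz_scaled_ge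
    {X : Type*} [NormedAddCommGroup X] [NormedSpace ℝ X] [CompleteSpace X]
    (A : X → Set (StrongDual ℝ X)) (hA : IsMaxMonotoneOp A) (hAlin : IsLinearRelation A)
    (f : X → EReal) (hproper : EProper f) (hconv : EConvex f)
    (hlsc : LowerSemicontinuous f)
    (h0 : (0 : X) ∈ domOp A ∩ interior (fdom f))
    (z : X) (hz₁ : z ∈ closure (domOp A)) (hz₂ : z ∉ domOp A)
    (hz₃ : z ∈ closure (fdom f)) :
    ∀ zs : StrongDual ℝ X, ∀ t : ℝ, 0 < t → t < 1 →
      ((t ^ 2 * zs z : ℝ) : EReal) ≤ fitz (opSum A (subdiff f)) (t • z, t • zs) := by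
  exact fitz_scaled_ge' A hA hAlin f hproper hconv hlsc h0 z hz₁ hz₂ hz₃
end

section
/- Let X be a real Banach space, let A: X ⇉ X* be a maximally monotone operator, and let f: X → (−∞,+∞] be a proper lower semicontinuous convex function such that dom A ∩ int dom ∂f ≠ ∅. Then ⋃_{λ>0} λ·(P_X(dom F_A) − P_X(dom F_{∂f})) = X, where P_X: X × X* → X is the projection (x,x*) ↦ x. -/
open NormedSpace Set Pointwise

variable {X : Type*} [NormedAddCommGroup X] [NormedSpace ℝ X]

lemma fitz_ne_top_of_mem_gra {A : X → Set (StrongDual ℝ X)} (hA : IsMonotoneOp A)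
    {p : X × StrongDual ℝ X} (hp : p ∈ gra A) : fitz A p ≠ ⊤ := by
  have hbound : fitz A p ≤ ((p.2 p.1 : ℝ) : EReal) := by
    refine iSup₂_le fun q hq => ?_
    have h := hA p hp q hq
    simp only [ContinuousLinearMap.sub_apply, map_sub] at h
    exact EReal.coe_le_coe_iff.2 (by linarith)
  intro h
  rw [h] at hbound
  exact (EReal.coe_ne_top _) (top_le_iff.1 hbound)

lemma f_ne_top_of_subdiff {f : X → EReal} (hproper : EProper f) {x : X}
    {xs : StrongDual ℝ X} (h : xs ∈ subdiff f x) : f x ≠ ⊤ := by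
  intro htop
  obtain ⟨y, hy⟩ := hproper.1
  have := h y
  rw [htop, EReal.add_top_of_ne_bot (EReal.coe_ne_bot _)] at this
  exact hy (top_le_iff.1 this)

lemma subdiff_monotone {f : X → EReal} (hproper : EProper f) :
    IsMonotoneOp (subdiff f) := by
  intro p hp q hq
  have hpt : f p.1 ≠ ⊤ := f_ne_top_of_subdiff hproper hp
  have hqt : f q.1 ≠ ⊤ := f_ne_top_of_subdiff hproper hq
  have hpb : f p.1 ≠ ⊥ := hproper.2 _
  have hqb : f q.1 ≠ ⊥ := hproper.2 _
  lift f p.1 to ℝ using ⟨hpt, hpb⟩ with r hr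
  lift f q.1 to ℝ using ⟨hqt, hqb⟩ with s hs
  have h1 := hp q.1
  have h2 := hq p.1
  rw [← hr, ← hs] at h1 h2
  rw [← EReal.coe_add] at h1 h2
  have h1' : p.2 (q.1 - p.1) + r ≤ s := EReal.coe_le_coe_iff.1 h1
  have h2' : q.2 (p.1 - q.1) + s ≤ r := EReal.coe_le_coe_iff.1 h2
  simp only [ContinuousLinearMap.sub_apply, map_sub] at *
  linarith

/-- For a maximally monotone `A` and a proper lsc convex `f` with
`dom A ∩ int dom ∂f ≠ ∅`, one has
`⋃_{λ>0} λ (P_X(dom F_A) − P_X(dom F_{∂f})) = X`. -/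
theorem union_scaled_proj_fitz_doms_eq_univ
    {X : Type*} [NormedAddCommGroup X] [NormedSpace ℝ X] [CompleteSpace X]
    (A : X → Set (StrongDual ℝ X)) (hA : IsMaxMonotoneOp A)
    (f : X → EReal) (hproper : EProper f) (hconv : EConvex f)
    (hlsc : LowerSemicontinuous f)
    (hcq : (domOp A ∩ interior (domOp (subdiff f))).Nonempty) :
    (⋃ l : ℝ, ⋃ _ : 0 < l,
        l • (Prod.fst '' {p : X × StrongDual ℝ X | fitz A p ≠ ⊤} -
             Prod.fst '' {p : X × StrongDual ℝ X | fitz (subdiff f) p ≠ ⊤})) =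
      (univ : Set X) := by
  obtain ⟨x₀, hxA, hxI⟩ := hcq
  obtain ⟨a, ha⟩ := hxA
  have hS : x₀ ∈ Prod.fst '' {p : X × StrongDual ℝ X | fitz A p ≠ ⊤} :=
    ⟨(x₀, a), fitz_ne_top_of_mem_gra hA.1 ha, rfl⟩
  obtain ⟨ε, hε, hball⟩ := Metric.mem_nhds_iff.1 (mem_interior_iff_mem_nhds.1 hxI)
  ext z
  simp only [mem_iUnion, mem_univ, iff_true]
  set l : ℝ := ‖z‖ / ε + 1 with hl
  have hl0 : 0 < l := by positivity
  refine ⟨l, hl0, ?_⟩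
  set y : X := x₀ - l⁻¹ • z with hy
  have hyball : y ∈ Metric.ball x₀ ε := by
    rw [Metric.mem_ball, dist_eq_norm]
    have : y - x₀ = -(l⁻¹ • z) := by rw [hy]; abel
    rw [this, norm_neg, norm_smul, norm_inv, Real.norm_eq_abs, abs_of_pos hl0]
    rw [inv_mul_lt_iff₀ hl0]
    have : ‖z‖ ≤ (‖z‖ / ε) * ε := by
      rw [div_mul_cancel₀ _ (ne_of_gt hε)]
    calc ‖z‖ ≤ (‖z‖ / ε) * ε := this
      _ < l * ε := by
          apply mul_lt_mul_of_pos_right _ hε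
          rw [hl]; linarith
  obtain ⟨ys, hys⟩ : (subdiff f y).Nonempty := hball hyball
  have hT : y ∈ Prod.fst '' {p : X × StrongDual ℝ X | fitz (subdiff f) p ≠ ⊤} :=
    ⟨(y, ys), fitz_ne_top_of_mem_gra (subdiff_monotone hproper) hys, rfl⟩
  have hmem : x₀ - y ∈
      Prod.fst '' {p : X × StrongDual ℝ X | fitz A p ≠ ⊤} -
        Prod.fst '' {p : X × StrongDual ℝ X | fitz (subdiff f) p ≠ ⊤} :=
    sub_mem_sub hS hT
  have : z = l • (x₀ - y) := by
    rw [hy]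
    rw [sub_sub_cancel, smul_inv_smul₀ (ne_of_gt hl0)]
  rw [this]
  exact smul_mem_smul_set hmem
end
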